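/- arXiv:0704.2749 — 4 statements merged into one kernel-verified Lean document; each statement's English description precedes it below -/
import Mathlib

section
/- Let n > 2 and let (G,f) be an n-ary groupoid. Then (G,f) is an n-ary group if and only if at least one of the following conditions holds: (a) f satisfies the (1,2)-associative law and the equation f(x_1,…,x_{i−1},z,x_{i+1},…,x_n) = x_0 is solvable at the place i = n and uniquely solvable at the place i = 1; (b) f satisfies the (n−1,n)-associative law and the equation is solvable at the place i = 1 and uniquely solvable at the place i = n; (c) f satisfies the (i,i+1)-associative law for some i ∈ {2,…,n−2} and the equation is uniquely solvable at the place i and at some place j > i. -/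
section NAry

variable {G : Type*}

/-- The result of substituting the "inner" application of `f` at 0-based position `i`
into the sequence `x` of `2n-1` arguments (indexed by naturals). -/
def applyAt (n : ℕ) (f : (Fin n → G) → G) (x : ℕ → G) (i : ℕ) : G :=
  f fun j => if (j : ℕ) < i then x (j : ℕ)
    else if (j : ℕ) = i then f (fun t => x (i + (t : ℕ)))
    else x ((j : ℕ) + n - 1)

/-- `(i+1,j+1)`-associativity (0-based positions `i` and `j`). -/
def IsAssocAt (n : ℕ) (f : (Fin n → G) → G) (i j : ℕ) : Prop :=
  ∀ x : ℕ → G, applyAt n f x i = applyAt n f x j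

/-- `f` is associative: all the `(i,j)`-associative laws hold. -/
def IsNAssoc (n : ℕ) (f : (Fin n → G) → G) : Prop :=
  ∀ i j : ℕ, i < n → j < n → IsAssocAt n f i j

/-- The equation `f(x₁,…,x_{i}, z, x_{i+2},…,x_n) = x₀` is uniquely solvable at the
0-based place `i`. -/
def IsUSolv (n : ℕ) (f : (Fin n → G) → G) (i : ℕ) : Prop :=
  ∀ (x : Fin n → G) (x₀ : G), ∃! z : G, f (fun m => if (m : ℕ) = i then z else x m) = x₀

/-- The equation `f(x₁,…,x_{i}, z, x_{i+2},…,x_n) = x₀` is solvable at the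
0-based place `i`. -/
def IsSolv (n : ℕ) (f : (Fin n → G) → G) (i : ℕ) : Prop :=
  ∀ (x : Fin n → G) (x₀ : G), ∃ z : G, f (fun m => if (m : ℕ) = i then z else x m) = x₀

/-- An `n`-ary group: associative and uniquely solvable at every place. -/
def IsNAryGroup (n : ℕ) (f : (Fin n → G) → G) : Prop :=
  IsNAssoc n f ∧ ∀ i : ℕ, i < n → IsUSolv n f i

/-- `bar` is the skew-element operation: `f(x,…,x, bar x) = x` (with `n-1` copies of `x`). -/
def IsSkewOf (n : ℕ) (f : (Fin n → G) → G) (bar : G → G) : Prop :=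
  ∀ x : G, f (fun m => if (m : ℕ) = n - 1 then bar x else x) = x

end NAry

namespace NG

variable {G : Type*}

def Fw (n : ℕ) (f : (Fin n → G) → G) (x : ℕ → G) : G := f fun j => x j

def ins (c : ℕ → G) (i : ℕ) (z : G) : ℕ → G := fun m => if m = i then z else c m

def spl (n : ℕ) (f : (Fin n → G) → G) (x : ℕ → G) (i : ℕ) : ℕ → G :=
  fun m => if m < i then x m
    else if m = i then Fw n f (fun t => x (i + t))
    else x (m + n - 1)

lemma Fw_congr (n : ℕ) (f : (Fin n → G) → G) {x y : ℕ → G}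
    (h : ∀ m, m < n → x m = y m) : Fw n f x = Fw n f y := by
  unfold Fw; congr 1; funext j; exact h j j.isLt

lemma applyAt_spl (n : ℕ) (f : (Fin n → G) → G) (x : ℕ → G) (i : ℕ) :
    applyAt n f x i = Fw n f (spl n f x i) := rfl

lemma ins_self (c : ℕ → G) (i : ℕ) (z : G) : ins c i z i = z := if_pos rfl
lemma ins_ne (c : ℕ → G) {i m : ℕ} (z : G) (h : m ≠ i) : ins c i z m = c m := if_neg h

lemma spl_lt (n : ℕ) (f : (Fin n → G) → G) (x : ℕ → G) {i m : ℕ} (h : m < i) :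
    spl n f x i m = x m := if_pos h
lemma spl_self (n : ℕ) (f : (Fin n → G) → G) (x : ℕ → G) (i : ℕ) :
    spl n f x i i = Fw n f (fun t => x (i + t)) := by
  unfold spl; rw [if_neg (Nat.lt_irrefl i), if_pos rfl]
lemma spl_gt (n : ℕ) (f : (Fin n → G) → G) (x : ℕ → G) {i m : ℕ} (h : i < m) :
    spl n f x i m = x (m + n - 1) := by
  unfold spl; rw [if_neg (by omega), if_neg (by omega)]

def Inj (n : ℕ) (f : (Fin n → G) → G) (i : ℕ) : Prop :=
  ∀ (c : ℕ → G) (z z' : G), Fw n f (ins c i z) = Fw n f (ins c i z') → z = z'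

def Srj (n : ℕ) (f : (Fin n → G) → G) (i : ℕ) : Prop :=
  ∀ (c : ℕ → G) (b : G), ∃ z : G, Fw n f (ins c i z) = b

lemma fw_ins_eq (n : ℕ) (f : (Fin n → G) → G) (c : ℕ → G) (i : ℕ) (z : G) :
    Fw n f (ins c i z) = f (fun m => if (m : ℕ) = i then z else c m) := rfl

lemma usolv_inj {n : ℕ} {f : (Fin n → G) → G} {i : ℕ} (h : IsUSolv n f i) : Inj n f i := by
  intro c z z' he
  obtain ⟨w, _, hu⟩ := h (fun m => c m) (Fw n f (ins c i z))
  have hz := hu z rfl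
  have hz' := hu z' he.symm
  rw [hz, hz']

lemma usolv_srj {n : ℕ} {f : (Fin n → G) → G} {i : ℕ} (h : IsUSolv n f i) : Srj n f i := by
  intro c b
  obtain ⟨w, hw, _⟩ := h (fun m => c m) b
  exact ⟨w, hw⟩

lemma solv_srj {n : ℕ} {f : (Fin n → G) → G} {i : ℕ}
    (h : ∀ (x : Fin n → G) (x₀ : G), ∃ z : G, f (fun m => if (m : ℕ) = i then z else x m) = x₀) :
    Srj n f i := by
  intro c b
  obtain ⟨w, hw⟩ := h (fun m => c m) b
  exact ⟨w, hw⟩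

lemma usolv_of {n : ℕ} {f : (Fin n → G) → G} {i : ℕ} (hn : 0 < n)
    (h1 : Inj n f i) (h2 : Srj n f i) : IsUSolv n f i := by
  intro x x₀
  set c : ℕ → G := fun t => if ht : t < n then x ⟨t, ht⟩ else x ⟨0, hn⟩ with hc
  obtain ⟨z, hz⟩ := h2 c x₀
  have key : ∀ w : G, f (fun m => if (m : ℕ) = i then w else x m) = Fw n f (ins c i w) := by
    intro w
    unfold Fw; congr 1; funext m
    by_cases hmi : (m : ℕ) = i
    · simp [ins, hmi]
    · simp only [ins, hmi, if_neg hmi, hc, m.isLt, dif_pos]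
  refine ⟨z, ?_, ?_⟩
  · show (f fun m => if (m : ℕ) = i then z else x m) = x₀
    rw [key]; exact hz
  intro y hy
  exact h1 c y z (by rw [← key y, ← key z, hy, ← hz, key])

end NG
namespace NG

variable {G : Type*}

lemma assoc_symm {n : ℕ} {f : (Fin n → G) → G} {i j : ℕ} (h : IsAssocAt n f i j) :
    IsAssocAt n f j i := fun x => (h x).symm

lemma assoc_trans {n : ℕ} {f : (Fin n → G) → G} {i j l : ℕ} (h1 : IsAssocAt n f i j)
    (h2 : IsAssocAt n f j l) : IsAssocAt n f i l := fun x => (h1 x).trans (h2 x)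

lemma assoc_refl {n : ℕ} {f : (Fin n → G) → G} (i : ℕ) : IsAssocAt n f i i := fun _ => rfl

/-- adjacent associativity from `m` up to `n-1` -/
def AdjFrom (n : ℕ) (f : (Fin n → G) → G) (m : ℕ) : Prop :=
  ∀ k, m ≤ k → k + 2 ≤ n → IsAssocAt n f k (k + 1)

lemma chain {n : ℕ} {f : (Fin n → G) → G} {a : ℕ} (h : AdjFrom n f a) :
    ∀ i j, a ≤ i → i ≤ j → j + 1 ≤ n → IsAssocAt n f i j := by
  intro i j hai hij hjn
  induction j, hij using Nat.le_induction with
  | base => exact assoc_refl i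
  | succ j hj ih =>
    exact assoc_trans (ih (by omega)) (h j (by omega) (by omega))

lemma asAt {n : ℕ} {f : (Fin n → G) → G} {i j : ℕ} (h : IsAssocAt n f i j) (x : ℕ → G) :
    Fw n f (spl n f x i) = Fw n f (spl n f x j) := h x

/-- padding a word `y` (of length `n`) with constant `g₀` context at place `r` -/
lemma fw_pad (n : ℕ) (f : (Fin n → G) → G) (g₀ : G) (y : ℕ → G) (r : ℕ) :
    Fw n f (spl n f (fun t => if t < r then g₀ else if t < r + n then y (t - r) else g₀) r)
      = Fw n f (ins (fun _ => g₀) r (Fw n f y)) := by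
  apply Fw_congr
  intro m hm
  rcases Nat.lt_trichotomy m r with h | h | h
  · rw [spl_lt _ _ _ h, ins_ne _ _ (by omega), if_pos h]
  · subst h
    rw [spl_self, ins_self]
    apply Fw_congr
    intro t _
    rw [if_neg (by omega), if_pos (by omega)]
    congr 1
    omega
  · rw [spl_gt _ _ _ h, ins_ne _ _ (by omega), if_neg (by omega), if_neg (by omega)]

/-- Upward extension: `(r,r+1)`-associativity plus injectivity at `r` gives all
adjacent associativity above `r`. -/
lemma up {n : ℕ} {f : (Fin n → G) → G} (hn : 2 < n) (g₀ : G) (r : ℕ)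
    (hA : IsAssocAt n f r (r + 1)) (hI : Inj n f r) : AdjFrom n f r := by
  intro k hk1
  induction k, hk1 using Nat.le_induction with
  | base => intro _; exact hA
  | succ K hKr ih =>
    intro hK2
    -- goal : IsAssocAt n f (K+1) (K+2), with IH giving IsAssocAt n f K (K+1)
    have IHA : IsAssocAt n f K (K + 1) := ih (by omega)
    intro x
    show Fw n f (spl n f x (K + 1)) = Fw n f (spl n f x (K + 2))
    apply hI (fun _ => g₀)
    rw [← fw_pad n f g₀ (spl n f x (K + 1)) r, ← fw_pad n f g₀ (spl n f x (K + 2)) r]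
    rw [show Fw n f (spl n f (fun t => if t < r then g₀ else if t < r + n then
          spl n f x (K + 1) (t - r) else g₀) r)
        = Fw n f (spl n f (fun t => if t < r then g₀ else if t < r + n then
          spl n f x (K + 1) (t - r) else g₀) (r + 1)) from hA _,
        show Fw n f (spl n f (fun t => if t < r then g₀ else if t < r + n then
          spl n f x (K + 2) (t - r) else g₀) r)
        = Fw n f (spl n f (fun t => if t < r then g₀ else if t < r + n then
          spl n f x (K + 2) (t - r) else g₀) (r + 1)) from hA _]
    have hY : ∀ (j : ℕ), j ≤ n - 2 → Fw n f (fun t =>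
        (fun u => if u < r then g₀ else if u < r + n then spl n f x (j + 1) (u - r) else g₀)
          (r + 1 + t))
        = Fw n f (spl n f (fun s => if s ≤ 2 * n - 3 then x (s + 1) else g₀) j) := by
      intro j hj
      apply Fw_congr
      intro t ht
      simp only []
      rcases Nat.lt_trichotomy t j with h | h | h
      · rw [if_neg (by omega), if_pos (by omega), spl_lt _ _ _ (by omega),
          spl_lt _ _ _ (by omega), if_pos (by omega)]
        congr 1
        omega
      · subst h
        rw [if_neg (by omega), if_pos (by omega)]
        rw [show r + 1 + t - r = t + 1 from by omega, spl_self, spl_self]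
        apply Fw_congr
        intro s _
        rw [if_pos (by omega)]
        congr 1
        omega
      · by_cases hlast : t = n - 1
        · subst hlast
          rw [if_neg (by omega), if_neg (by omega), spl_gt _ _ _ (by omega),
            if_neg (by omega)]
        · rw [if_neg (by omega), if_pos (by omega), spl_gt _ _ _ (by omega),
            spl_gt _ _ _ (by omega), if_pos (by omega)]
          congr 1
          omega
    apply Fw_congr
    intro m hm
    rcases Nat.lt_trichotomy m (r + 1) with h | h | h
    · rcases Nat.lt_trichotomy m r with h' | h' | h'
      · rw [spl_lt _ _ _ h, spl_lt _ _ _ h, if_pos h', if_pos h']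
      · subst h'
        rw [spl_lt _ _ _ h, spl_lt _ _ _ h]
        simp only [Nat.lt_irrefl, if_false, if_pos (show m < m + n from by omega),
          Nat.sub_self]
        rw [spl_lt _ _ _ (by omega), spl_lt _ _ _ (by omega)]
      · omega
    · subst h
      rw [spl_self, spl_self]
      rw [hY (K + 0) (by omega), hY (K + 1) (by omega)]
      exact IHA _
    · rw [spl_gt _ _ _ h, spl_gt _ _ _ h, if_neg (by omega), if_neg (by omega),
        if_neg (by omega), if_neg (by omega)]

end NG
namespace NG

variable {G : Type*}

/-- Downward extension step. -/
lemma down_step {n : ℕ} {f : (Fin n → G) → G} (hn : 2 < n) (g₀ : G) (m q : ℕ)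
    (h1m : 1 ≤ m) (hmq : m < q) (hq : q + 1 ≤ n)
    (hadj : AdjFrom n f m) (hI : Inj n f q) : AdjFrom n f (m - 1) := by
  intro k hk hk2
  by_cases hkm : m ≤ k
  · exact hadj k hkm hk2
  · have hkeq : k = m - 1 := by omega
    subst hkeq
    have hA' : IsAssocAt n f (q - 1) q := by
      have := hadj (q - 1) (by omega) (by omega)
      rwa [show q - 1 + 1 = q from by omega] at this
    have hAm : IsAssocAt n f m (m + 1) := hadj m le_rfl (by omega)
    rw [show m - 1 + 1 = m from by omega]
    intro x
    show Fw n f (spl n f x (m - 1)) = Fw n f (spl n f x m)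
    apply hI (fun _ => g₀)
    rw [← fw_pad n f g₀ (spl n f x (m - 1)) q, ← fw_pad n f g₀ (spl n f x m) q]
    rw [show Fw n f (spl n f (fun t => if t < q then g₀ else if t < q + n then
          spl n f x (m - 1) (t - q) else g₀) q)
        = Fw n f (spl n f (fun t => if t < q then g₀ else if t < q + n then
          spl n f x (m - 1) (t - q) else g₀) (q - 1)) from (hA' _).symm,
        show Fw n f (spl n f (fun t => if t < q then g₀ else if t < q + n then
          spl n f x m (t - q) else g₀) q)
        = Fw n f (spl n f (fun t => if t < q then g₀ else if t < q + n then
          spl n f x m (t - q) else g₀) (q - 1)) from (hA' _).symm]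
    have hZ : ∀ (j : ℕ), Fw n f (fun t =>
        (fun u => if u < q then g₀ else if u < q + n then spl n f x j (u - q) else g₀)
          (q - 1 + t))
        = Fw n f (spl n f (fun s => if s = 0 then g₀ else x (s - 1)) (j + 1)) := by
      intro j
      apply Fw_congr
      intro t ht
      simp only []
      by_cases ht0 : t = 0
      · subst ht0
        rw [if_pos (by omega), spl_lt _ _ _ (by omega), if_pos rfl]
      · rw [if_neg (by omega), if_pos (by omega),
          show q - 1 + t - q = t - 1 from by omega]
        rcases Nat.lt_trichotomy t (j + 1) with h | h | h
        · rw [spl_lt _ _ _ (by omega), spl_lt _ _ _ (by omega), if_neg ht0]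
        · rw [show t - 1 = j from by omega, spl_self, h, spl_self]
          apply Fw_congr
          intro s _
          rw [if_neg (by omega)]
          congr 1
          omega
        · rw [spl_gt _ _ _ (by omega), spl_gt _ _ _ (by omega), if_neg (by omega)]
          congr 1
          omega
    apply Fw_congr
    intro m' hm'
    rcases Nat.lt_trichotomy m' (q - 1) with h | h | h
    · rw [spl_lt _ _ _ h, spl_lt _ _ _ h, if_pos (by omega), if_pos (by omega)]
    · subst h
      rw [spl_self, spl_self, hZ (m - 1), hZ m,
        show m - 1 + 1 = m from by omega]
      exact hAm _
    · rw [spl_gt _ _ _ h, spl_gt _ _ _ h]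
      by_cases hq' : m' = q
      · subst hq'
        rw [if_neg (by omega), if_pos (by omega), if_neg (by omega), if_pos (by omega),
          show m' + n - 1 - m' = n - 1 from by omega,
          spl_gt _ _ _ (by omega), spl_gt _ _ _ (by omega)]
      · rw [if_neg (by omega), if_neg (by omega), if_neg (by omega), if_neg (by omega)]

lemma down {n : ℕ} {f : (Fin n → G) → G} (hn : 2 < n) (g₀ : G) (q : ℕ)
    (hq : q + 1 ≤ n) (hI : Inj n f q) :
    ∀ m, m < q → AdjFrom n f m → AdjFrom n f 0 := by
  intro m
  induction m with
  | zero => exact fun _ h => h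
  | succ mm ih =>
    intro hmq h
    have h' := down_step hn g₀ (mm + 1) q (by omega) hmq hq h hI
    rw [show mm + 1 - 1 = mm from by omega] at h'
    exact ih (by omega) h'

end NG
namespace NG

variable {G : Type*}

lemma rn_global {n : ℕ} {f : (Fin n → G) → G} (hn : 2 < n) (hadj : AdjFrom n f 0)
    (g₀ : G) (R : ℕ → G) (hS0 : Srj n f 0) (h1 : Fw n f (ins R 0 g₀) = g₀) :
    ∀ xx, Fw n f (ins R 0 xx) = xx := by
  intro xx
  obtain ⟨z, hz⟩ := hS0 (fun _ => g₀) xx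
  set U : ℕ → G := fun t => if t = 0 then z else if t ≤ n - 1 then g₀ else R (t - (n - 1))
    with hU
  have e1 : Fw n f (spl n f U 0) = Fw n f (ins R 0 xx) := by
    apply Fw_congr
    intro m hm
    rcases Nat.eq_zero_or_pos m with rfl | hmp
    · rw [spl_self, ins_self]
      rw [show Fw n f (fun t => U (0 + t)) = Fw n f (ins (fun _ => g₀) 0 z) from ?_]
      · exact hz
      apply Fw_congr
      intro t ht
      rcases Nat.eq_zero_or_pos t with rfl | htp
      · rw [ins_self]; simp [hU]
      · rw [hU, ins_ne _ _ (by omega)]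
        try simp only []
        rw [if_neg (by omega), if_pos (by omega)]
    · rw [spl_gt _ _ _ hmp, ins_ne _ _ (by omega), hU]
      try simp only []
      rw [if_neg (by omega), if_neg (by omega)]
      congr 1
      omega
  have e2 : Fw n f (spl n f U (n - 1)) = xx := by
    rw [show Fw n f (spl n f U (n - 1)) = Fw n f (ins (fun _ => g₀) 0 z) from ?_]
    · exact hz
    apply Fw_congr
    intro m hm
    rcases Nat.lt_trichotomy m (n - 1) with h | h | h
    · rw [spl_lt _ _ _ h]
      rcases Nat.eq_zero_or_pos m with rfl | hmp
      · rw [ins_self]; simp [hU]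
      · rw [hU, ins_ne _ _ (by omega)]
        try simp only []
        rw [if_neg (by omega), if_pos (by omega)]
    · subst h
      rw [spl_self, ins_ne _ _ (by omega)]
      rw [show Fw n f (fun t => U (n - 1 + t)) = Fw n f (ins R 0 g₀) from ?_]
      · exact h1
      apply Fw_congr
      intro t ht
      rcases Nat.eq_zero_or_pos t with rfl | htp
      · rw [ins_self, hU]
        try simp only []
        rw [if_neg (by omega), if_pos (by omega)]
      · rw [hU, ins_ne _ _ (by omega)]
        try simp only []
        rw [if_neg (by omega), if_neg (by omega)]
        congr 1
        omega
    · omega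
  calc Fw n f (ins R 0 xx) = Fw n f (spl n f U 0) := e1.symm
    _ = Fw n f (spl n f U (n - 1)) := chain hadj 0 (n - 1) (by omega) (by omega) (by omega) U
    _ = xx := e2

lemma ln_global {n : ℕ} {f : (Fin n → G) → G} (hn : 2 < n) (hadj : AdjFrom n f 0)
    (g₀ : G) (L : ℕ → G) (hSN : Srj n f (n - 1)) (h1 : Fw n f (ins L (n - 1) g₀) = g₀) :
    ∀ xx, Fw n f (ins L (n - 1) xx) = xx := by
  intro xx
  obtain ⟨t0, ht0⟩ := hSN (fun _ => g₀) xx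
  set U : ℕ → G := fun t => if t < n - 1 then L t else if t < 2 * n - 2 then g₀ else t0
    with hU
  have e1 : Fw n f (spl n f U (n - 1)) = Fw n f (ins L (n - 1) xx) := by
    apply Fw_congr
    intro m hm
    rcases Nat.lt_trichotomy m (n - 1) with h | h | h
    · rw [spl_lt _ _ _ h, ins_ne _ _ (by omega), hU]
      try simp only []
      rw [if_pos h]
    · subst h
      rw [spl_self, ins_self]
      rw [show Fw n f (fun t => U (n - 1 + t)) = Fw n f (ins (fun _ => g₀) (n - 1) t0)
        from ?_]
      · exact ht0
      apply Fw_congr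
      intro t ht
      rcases Nat.lt_trichotomy t (n - 1) with h' | h' | h'
      · rw [ins_ne _ _ (by omega), hU]
        try simp only []
        rw [if_neg (by omega), if_pos (by omega)]
      · subst h'
        rw [ins_self, hU]
        try simp only []
        rw [if_neg (by omega), if_neg (by omega)]
      · omega
    · omega
  have e2 : Fw n f (spl n f U 0) = xx := by
    rw [show Fw n f (spl n f U 0) = Fw n f (ins (fun _ => g₀) (n - 1) t0) from ?_]
    · exact ht0
    apply Fw_congr
    intro m hm
    rcases Nat.eq_zero_or_pos m with rfl | hmp
    · rw [spl_self, ins_ne _ _ (by omega)]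
      rw [show Fw n f (fun t => U (0 + t)) = Fw n f (ins L (n - 1) g₀) from ?_]
      · exact h1
      apply Fw_congr
      intro t ht
      rcases Nat.lt_trichotomy t (n - 1) with h' | h' | h'
      · rw [ins_ne _ _ (by omega), hU]
        try simp only []
        rw [if_pos (by omega)]
        exact congrArg L (by omega)
      · subst h'
        rw [ins_self, hU]
        try simp only []
        rw [if_neg (by omega), if_pos (by omega)]
      · omega
    · rw [spl_gt _ _ _ hmp, hU]
      try simp only []
      rcases Nat.lt_trichotomy m (n - 1) with h' | h' | h'
      · rw [if_neg (by omega), if_pos (by omega), ins_ne _ _ (by omega)]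
      · subst h'
        rw [if_neg (by omega), if_neg (by omega), ins_self]
      · omega
  calc Fw n f (ins L (n - 1) xx) = Fw n f (spl n f U (n - 1)) := e1.symm
    _ = Fw n f (spl n f U 0) := (chain hadj 0 (n - 1) (by omega) (by omega) (by omega) U).symm
    _ = xx := e2

lemma inj0 {n : ℕ} {f : (Fin n → G) → G} (hn : 2 < n) (hadj : AdjFrom n f 0)
    (g₀ : G) (hS0 : Srj n f 0) (hSN : Srj n f (n - 1)) : Inj n f 0 := by
  intro c u v huv
  obtain ⟨h, hh⟩ := hSN (fun t => if t = 0 then g₀ else c t) g₀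
  set R : ℕ → G := fun t => if t ≤ n - 2 then c t else h with hR
  have hR1 : Fw n f (ins R 0 g₀) = g₀ := by
    rw [show Fw n f (ins R 0 g₀)
        = Fw n f (ins (fun t => if t = 0 then g₀ else c t) (n - 1) h) from ?_]
    · exact hh
    apply Fw_congr
    intro m hm
    rcases Nat.eq_zero_or_pos m with rfl | hmp
    · rw [ins_self, ins_ne _ _ (by omega)]
      simp
    · rw [ins_ne _ _ (by omega), hR]
      try simp only []
      rcases Nat.lt_trichotomy m (n - 1) with h' | h' | h'
      · rw [if_pos (by omega), ins_ne _ _ (by omega)]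
        try simp only []
        rw [if_neg (by omega)]
      · subst h'
        rw [if_neg (by omega), ins_self]
      · omega
  have hRg := rn_global hn hadj g₀ R hS0 hR1
  obtain ⟨kk, hk⟩ := hSN (fun t => if t = 0 then c (n - 1) else g₀) h
  set KW : ℕ → G := ins (fun t => if t = 0 then c (n - 1) else g₀) (n - 1) kk with hKW
  have key : ∀ xx, Fw n f (ins KW 0 (Fw n f (ins c 0 xx))) = xx := by
    intro xx
    set U : ℕ → G := fun t => if t = 0 then xx else if t ≤ n - 1 then c t
      else KW (t - (n - 1)) with hU
    have e1 : Fw n f (spl n f U 0) = Fw n f (ins KW 0 (Fw n f (ins c 0 xx))) := by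
      apply Fw_congr
      intro m hm
      rcases Nat.eq_zero_or_pos m with rfl | hmp
      · rw [spl_self, ins_self]
        apply Fw_congr
        intro t ht
        rcases Nat.eq_zero_or_pos t with rfl | htp
        · rw [ins_self]; simp [hU]
        · rw [hU, ins_ne _ _ (by omega)]
          try simp only []
          rw [if_neg (by omega), if_pos (by omega)]
          congr 1
          omega
      · rw [spl_gt _ _ _ hmp, ins_ne _ _ (by omega), hU]
        try simp only []
        rw [if_neg (by omega), if_neg (by omega)]
        congr 1
        omega
    have e2 : Fw n f (spl n f U (n - 1)) = Fw n f (ins R 0 xx) := by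
      apply Fw_congr
      intro m hm
      rcases Nat.lt_trichotomy m (n - 1) with h' | h' | h'
      · rw [spl_lt _ _ _ h']
        rcases Nat.eq_zero_or_pos m with rfl | hmp
        · rw [ins_self]; simp [hU]
        · rw [hU, ins_ne _ _ (by omega), hR]
          try simp only []
          rw [if_neg (by omega), if_pos (by omega), if_pos (by omega)]
      · subst h'
        rw [spl_self, ins_ne _ _ (by omega), hR]
        try simp only []
        rw [if_neg (by omega)]
        rw [show Fw n f (fun t => U (n - 1 + t)) = Fw n f (ins (fun t =>
            if t = 0 then c (n - 1) else g₀) (n - 1) kk) from ?_]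
        · rw [← hKW]; exact hk
        apply Fw_congr
        intro t ht
        rcases Nat.eq_zero_or_pos t with rfl | htp
        · rw [hU]
          try simp only []
          rw [if_neg (by omega), if_pos (by omega), ins_ne _ _ (by omega), if_pos rfl]
          exact congrArg c (by omega)
        · rw [hU]
          try simp only []
          rw [if_neg (by omega), if_neg (by omega), hKW]
          congr 1
          omega
      · omega
    calc Fw n f (ins KW 0 (Fw n f (ins c 0 xx))) = Fw n f (spl n f U 0) := e1.symm
      _ = Fw n f (spl n f U (n - 1)) :=
          chain hadj 0 (n - 1) (by omega) (by omega) (by omega) U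
      _ = Fw n f (ins R 0 xx) := e2
      _ = xx := hRg xx
  calc u = Fw n f (ins KW 0 (Fw n f (ins c 0 u))) := (key u).symm
    _ = Fw n f (ins KW 0 (Fw n f (ins c 0 v))) := by rw [huv]
    _ = v := key v

lemma injN {n : ℕ} {f : (Fin n → G) → G} (hn : 2 < n) (hadj : AdjFrom n f 0)
    (g₀ : G) (hS0 : Srj n f 0) (hSN : Srj n f (n - 1)) : Inj n f (n - 1) := by
  intro c u v huv
  obtain ⟨g, hg⟩ := hS0 (fun t => if t ≤ n - 2 then c t else g₀) g₀
  set L : ℕ → G := fun t => if t = 0 then g else c t with hL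
  have hL1 : Fw n f (ins L (n - 1) g₀) = g₀ := by
    rw [show Fw n f (ins L (n - 1) g₀)
        = Fw n f (ins (fun t => if t ≤ n - 2 then c t else g₀) 0 g) from ?_]
    · exact hg
    apply Fw_congr
    intro m hm
    rcases Nat.eq_zero_or_pos m with rfl | hmp
    · rw [ins_ne _ _ (by omega), ins_self, hL]
      simp
    · rcases Nat.lt_trichotomy m (n - 1) with h' | h' | h'
      · rw [ins_ne _ _ (by omega), ins_ne _ _ (by omega), hL]
        try simp only []
        rw [if_neg (by omega), if_pos (by omega)]
      · subst h'
        rw [ins_self, ins_ne _ _ (by omega)]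
        try simp only []
        rw [if_neg (by omega)]
      · omega
  have hLg := ln_global hn hadj g₀ L hSN hL1
  obtain ⟨cs, hcs⟩ := hS0 (fun t => if t = n - 1 then c 0 else g₀) g
  set CW : ℕ → G := ins (fun t => if t = n - 1 then c 0 else g₀) 0 cs with hCW
  have key : ∀ xx, Fw n f (ins CW (n - 1) (Fw n f (ins c (n - 1) xx))) = xx := by
    intro xx
    set U : ℕ → G := fun t => if t ≤ n - 2 then CW t
      else if t - (n - 1) ≤ n - 2 then c (t - (n - 1)) else xx with hU
    have e1 : Fw n f (spl n f U (n - 1)) = Fw n f (ins CW (n - 1) (Fw n f (ins c (n - 1) xx))) := by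
      apply Fw_congr
      intro m hm
      rcases Nat.lt_trichotomy m (n - 1) with h' | h' | h'
      · rw [spl_lt _ _ _ h', ins_ne _ _ (by omega), hU]
        try simp only []
        rw [if_pos (by omega)]
      · subst h'
        rw [spl_self, ins_self]
        apply Fw_congr
        intro t ht
        rcases Nat.lt_trichotomy t (n - 1) with h'' | h'' | h''
        · rw [ins_ne _ _ (by omega), hU]
          try simp only []
          rw [if_neg (by omega), if_pos (by omega)]
          congr 1
          omega
        · subst h''
          rw [ins_self, hU]
          try simp only []
          rw [if_neg (by omega), if_neg (by omega)]
        · omega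
      · omega
    have e2 : Fw n f (spl n f U 0) = Fw n f (ins L (n - 1) xx) := by
      apply Fw_congr
      intro m hm
      rcases Nat.eq_zero_or_pos m with rfl | hmp
      · rw [spl_self, ins_ne _ _ (by omega), hL]
        try simp only []
        rw [show Fw n f (fun t => U (0 + t)) = Fw n f (ins (fun t =>
            if t = n - 1 then c 0 else g₀) 0 cs) from ?_]
        · rw [← hCW]; exact hcs
        apply Fw_congr
        intro t ht
        rcases Nat.lt_trichotomy t (n - 1) with h'' | h'' | h''
        · rw [hU]
          try simp only []
          rw [if_pos (by omega), hCW]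
          congr 1
          omega
        · subst h''
          rw [hU]
          try simp only []
          rw [if_neg (by omega), if_pos (by omega), ins_ne _ _ (by omega), if_pos rfl]
          congr 1
          omega
        · omega
      · rcases Nat.lt_trichotomy m (n - 1) with h' | h' | h'
        · rw [spl_gt _ _ _ hmp, ins_ne _ _ (by omega), hU, hL]
          try simp only []
          rw [if_neg (by omega), if_pos (by omega), if_neg (by omega)]
          congr 1
          omega
        · subst h'
          rw [spl_gt _ _ _ hmp, ins_self, hU]
          try simp only []
          rw [if_neg (by omega), if_neg (by omega)]
        · omega
    calc Fw n f (ins CW (n - 1) (Fw n f (ins c (n - 1) xx)))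
        = Fw n f (spl n f U (n - 1)) := e1.symm
      _ = Fw n f (spl n f U 0) :=
          (chain hadj 0 (n - 1) (by omega) (by omega) (by omega) U).symm
      _ = Fw n f (ins L (n - 1) xx) := e2
      _ = xx := hLg xx
  calc u = Fw n f (ins CW (n - 1) (Fw n f (ins c (n - 1) u))) := (key u).symm
    _ = Fw n f (ins CW (n - 1) (Fw n f (ins c (n - 1) v))) := by rw [huv]
    _ = v := key v

end NG
namespace NG

variable {G : Type*}

lemma srj_mid {n : ℕ} {f : (Fin n → G) → G} (hn : 2 < n) (hadj : AdjFrom n f 0)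
    (g₀ : G) (hS0 : Srj n f 0) (hSN : Srj n f (n - 1)) (p : ℕ) (hp1 : 1 ≤ p)
    (hp2 : p + 2 ≤ n) : Srj n f p := by
  intro c b
  obtain ⟨u, hu⟩ := hS0 (fun t => if t ≤ p then g₀ else c t) b
  obtain ⟨s, hs⟩ := hSN (fun t => if t < p then c t else g₀) u
  set IW : ℕ → G := ins (fun _ => g₀) (n - p - 1) s with hIW
  refine ⟨Fw n f IW, ?_⟩
  set U : ℕ → G := fun t => if t < p then c t else if t - p < n then IW (t - p)
    else c (t - (n - 1)) with hU
  have e1 : Fw n f (ins c p (Fw n f IW)) = Fw n f (spl n f U p) := by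
    apply Fw_congr
    intro m hm
    rcases Nat.lt_trichotomy m p with h | h | h
    · rw [ins_ne _ _ (by omega), spl_lt _ _ _ h, hU]
      try simp only []
      rw [if_pos h]
    · subst h
      rw [ins_self, spl_self]
      apply Fw_congr
      intro t ht
      rw [hU]
      try simp only []
      rw [if_neg (by omega), if_pos (by omega)]
      exact congrArg IW (by omega)
    · rw [ins_ne _ _ (by omega), spl_gt _ _ _ h, hU]
      try simp only []
      rw [if_neg (by omega), if_neg (by omega)]
      exact congrArg c (by omega)
  have e2 : Fw n f (spl n f U 0) = Fw n f (ins (fun t => if t ≤ p then g₀ else c t) 0 u) := by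
    apply Fw_congr
    intro m hm
    rcases Nat.eq_zero_or_pos m with rfl | hmp
    · rw [spl_self, ins_self]
      rw [show Fw n f (fun t => U (0 + t))
          = Fw n f (ins (fun t => if t < p then c t else g₀) (n - 1) s) from ?_]
      · exact hs
      apply Fw_congr
      intro t ht
      rcases Nat.lt_trichotomy t (n - 1) with h' | h' | h'
      · rw [ins_ne _ _ (by omega), hU]
        try simp only []
        by_cases htp : t < p
        · rw [if_pos (by omega), if_pos htp]
          exact congrArg c (by omega)
        · rw [if_neg (by omega), if_pos (by omega), if_neg htp, hIW,
            ins_ne _ _ (by omega)]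
      · subst h'
        rw [ins_self, hU]
        try simp only []
        rw [if_neg (by omega), if_pos (by omega),
          show 0 + (n - 1) - p = n - p - 1 from by omega, hIW, ins_self]
      · omega
    · rw [spl_gt _ _ _ hmp, ins_ne _ _ (by omega), hU]
      try simp only []
      rcases Nat.lt_trichotomy m p with h' | h' | h'
      · rw [if_neg (by omega), if_pos (by omega), if_pos (by omega), hIW,
          ins_ne _ _ (by omega)]
      · subst h'
        rw [if_neg (by omega), if_pos (by omega), if_pos (by omega), hIW,
          ins_ne _ _ (by omega)]
      · rw [if_neg (by omega), if_neg (by omega), if_neg (by omega)]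
        exact congrArg c (by omega)
  calc Fw n f (ins c p (Fw n f IW)) = Fw n f (spl n f U p) := e1
    _ = Fw n f (spl n f U 0) := (chain hadj 0 p (by omega) (by omega) (by omega) U).symm
    _ = Fw n f (ins (fun t => if t ≤ p then g₀ else c t) 0 u) := e2
    _ = b := hu

lemma inj_mid {n : ℕ} {f : (Fin n → G) → G} (hn : 2 < n) (hadj : AdjFrom n f 0)
    (g₀ : G) (hI0 : Inj n f 0) (hIN : Inj n f (n - 1)) (p : ℕ) (hp1 : 1 ≤ p)
    (hp2 : p + 2 ≤ n) : Inj n f p := by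
  intro c u v huv
  set r : ℕ := n - p - 1 with hr
  set C : ℕ → G := fun t => if t < r then g₀ else c (t - r) with hC
  set D : ℕ → G := fun t => if t ≤ r then c (p + t) else g₀ with hD
  have e3 : ∀ w, Fw n f (spl n f
      (fun t => if t < r then g₀ else if t < r + n then ins c p w (t - r) else g₀) (n - 1))
      = Fw n f (ins C (n - 1) (Fw n f (ins D 0 w))) := by
    intro w
    apply Fw_congr
    intro m hm
    rcases Nat.lt_trichotomy m (n - 1) with h | h | h
    · rw [spl_lt _ _ _ h, ins_ne C (Fw n f (ins D 0 w)) (show m ≠ n - 1 from by omega), hC]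
      try simp only []
      rcases Nat.lt_or_ge m r with h' | h'
      · rw [if_pos h', if_pos h']
      · rw [if_neg (show ¬ m < r from by omega), if_pos (show m < r + n from by omega),
          ins_ne c w (show m - r ≠ p from by omega), if_neg (show ¬ m < r from by omega)]
    · subst h
      rw [spl_self, ins_self]
      apply Fw_congr
      intro t ht
      rcases Nat.eq_zero_or_pos t with rfl | htp
      · rw [ins_self]
        try simp only []
        rw [if_neg (by omega), if_pos (by omega),
          show n - 1 + 0 - r = p from by omega, ins_self]
      · rw [ins_ne D w (show t ≠ 0 from by omega), hD]
        try simp only []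
        rcases Nat.lt_or_ge (n - 1 + t) (r + n) with h' | h'
        · rw [if_neg (show ¬ n - 1 + t < r from by omega), if_pos h',
            ins_ne c w (show n - 1 + t - r ≠ p from by omega), if_pos (show t ≤ r from by omega)]
          exact congrArg c (by omega)
        · rw [if_neg (show ¬ n - 1 + t < r from by omega),
            if_neg (show ¬ n - 1 + t < r + n from by omega),
            if_neg (show ¬ t ≤ r from by omega)]
    · omega
  have E1 : Fw n f (spl n f
      (fun t => if t < r then g₀ else if t < r + n then ins c p u (t - r) else g₀) (n - 1))
      = Fw n f (spl n f
      (fun t => if t < r then g₀ else if t < r + n then ins c p v (t - r) else g₀) (n - 1)) := by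
    have m1 := chain hadj r (n - 1) (by omega) (by omega) (by omega)
    rw [← asAt m1 (fun t => if t < r then g₀ else if t < r + n then ins c p u (t - r) else g₀),
      ← asAt m1 (fun t => if t < r then g₀ else if t < r + n then ins c p v (t - r) else g₀),
      fw_pad n f g₀ (ins c p u) r, fw_pad n f g₀ (ins c p v) r, huv]
  rw [e3 u, e3 v] at E1
  exact hI0 D u v (hIN C _ _ E1)

lemma post {n : ℕ} {f : (Fin n → G) → G} (hn : 2 < n) (g₀ : G) (hadj : AdjFrom n f 0)
    (hS0 : Srj n f 0) (hSN : Srj n f (n - 1)) : IsNAryGroup n f := by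
  have hI0 := inj0 hn hadj g₀ hS0 hSN
  have hIN := injN hn hadj g₀ hS0 hSN
  constructor
  · intro i j hi hj
    rcases Nat.le_total i j with h | h
    · exact chain hadj i j (by omega) h (by omega)
    · exact assoc_symm (chain hadj j i (by omega) h (by omega))
  · intro i hi
    apply usolv_of (by omega)
    · rcases Nat.eq_zero_or_pos i with rfl | hi0
      · exact hI0
      rcases Nat.lt_or_ge i (n - 1) with hiN | hiN
      · exact inj_mid hn hadj g₀ hI0 hIN i (by omega) (by omega)
      · rw [show i = n - 1 from by omega]; exact hIN
    · rcases Nat.eq_zero_or_pos i with rfl | hi0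
      · exact hS0
      rcases Nat.lt_or_ge i (n - 1) with hiN | hiN
      · exact srj_mid hn hadj g₀ hS0 hSN i (by omega) (by omega)
      · rw [show i = n - 1 from by omega]; exact hSN

end NG
namespace NG

variable {G : Type*}

lemma Psrj {n : ℕ} {f : (Fin n → G) → G} (hn : 2 < n) (hadj : AdjFrom n f 0)
    (g₀ : G) (p : ℕ) (hp1 : 1 ≤ p) (hp2 : p + 2 ≤ n) (hSp : Srj n f p) :
    Srj n f (n - 1) := by
  have main : ∀ m, m ≤ n - 1 → ∀ (d : ℕ → G) (b : G), ∃ z : ℕ → G,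
      Fw n f (fun t => if t < m then d t else z t) = b := by
    intro m
    induction m with
    | zero =>
      intro _ d b
      obtain ⟨s, hs⟩ := hSp (fun _ => g₀) b
      refine ⟨ins (fun _ => g₀) p s, ?_⟩
      rw [show (fun t => if t < 0 then d t else ins (fun _ => g₀) p s t)
          = ins (fun _ => g₀) p s from ?_]
      · exact hs
      funext t
      rw [if_neg (by omega)]
    | succ m ih =>
      intro hm1 d b
      obtain ⟨z, hz⟩ := ih (by omega) d b
      obtain ⟨s, hs⟩ := hSp (fun t => if t = 0 then d m else g₀) (z m)
      set w : ℕ → G := fun t => if t = n - 1 then z (m + 1)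
        else ins (fun t' => if t' = 0 then d m else g₀) p s (t + 1) with hw
      refine ⟨fun t => if t = m + 1 then Fw n f w else z t, ?_⟩
      show Fw n f (fun t => if t < m + 1 then d t else if t = m + 1 then Fw n f w else z t) = b
      set U : ℕ → G := fun t => if t ≤ m then d t else if t - (m + 1) < n then w (t - (m + 1))
        else z (t - (n - 1)) with hU
      have e1 : Fw n f (spl n f U (m + 1))
          = Fw n f (fun t => if t < m + 1 then d t else if t = m + 1 then Fw n f w else z t) := by
        apply Fw_congr
        intro s' hs'
        rcases Nat.lt_trichotomy s' (m + 1) with h | h | h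
        · rw [spl_lt _ _ _ h, hU]
          try simp only []
          rw [if_pos (show s' ≤ m from by omega), if_pos h]
        · subst h
          rw [spl_self, if_neg (by omega), if_pos rfl]
          apply Fw_congr
          intro t ht
          rw [hU]
          try simp only []
          rw [if_neg (by omega), if_pos (by omega)]
          exact congrArg w (by omega)
        · rw [spl_gt _ _ _ h, hU]
          try simp only []
          rw [if_neg (by omega), if_neg (by omega), if_neg (by omega), if_neg (by omega)]
          exact congrArg z (by omega)
      have e2 : Fw n f (spl n f U m) = Fw n f (fun t => if t < m then d t else z t) := by
        apply Fw_congr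
        intro s' hs'
        rcases Nat.lt_trichotomy s' m with h | h | h
        · rw [spl_lt _ _ _ h, hU]
          try simp only []
          rw [if_pos (show s' ≤ m from by omega), if_pos h]
        · subst h
          rw [spl_self, if_neg (by omega)]
          rw [show Fw n f (fun t => U (s' + t)) = Fw n f (ins (fun t' =>
              if t' = 0 then d s' else g₀) p s) from ?_]
          · exact hs
          apply Fw_congr
          intro t ht
          rcases Nat.eq_zero_or_pos t with rfl | htp
          · rw [hU]
            try simp only []
            rw [if_pos (by omega), ins_ne _ _ (by omega), if_pos rfl]
            exact congrArg d (by omega)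
          · rw [hU]
            try simp only []
            rw [if_neg (by omega), if_pos (by omega), hw]
            try simp only []
            rw [if_neg (by omega)]
            exact congrArg (ins (fun t' => if t' = 0 then d s' else g₀) p s) (by omega)
        · rw [spl_gt _ _ _ h, hU, if_neg (show ¬ s' < m from by omega)]
          try simp only []
          rw [if_neg (by omega)]
          rcases Nat.lt_or_ge s' (m + 2) with h' | h'
          · rw [if_pos (by omega), hw]
            try simp only []
            rw [if_pos (by omega)]
            exact congrArg z (by omega)
          · rw [if_neg (by omega)]
            exact congrArg z (by omega)
      calc Fw n f (fun t => if t < m + 1 then d t else if t = m + 1 then Fw n f w else z t)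
          = Fw n f (spl n f U (m + 1)) := e1.symm
        _ = Fw n f (spl n f U m) := (asAt (hadj m (by omega) (by omega)) U).symm
        _ = Fw n f (fun t => if t < m then d t else z t) := e2
        _ = b := hz
  intro c b
  obtain ⟨z, hz⟩ := main (n - 1) le_rfl c b
  refine ⟨z (n - 1), ?_⟩
  rw [← hz]
  apply Fw_congr
  intro t ht
  rcases Nat.lt_trichotomy t (n - 1) with h | h | h
  · rw [ins_ne _ _ (by omega), if_pos h]
  · subst h
    rw [ins_self, if_neg (by omega)]
  · omega

lemma Qsrj {n : ℕ} {f : (Fin n → G) → G} (hn : 2 < n) (hadj : AdjFrom n f 0)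
    (g₀ : G) (p : ℕ) (hp1 : 1 ≤ p) (hp2 : p + 2 ≤ n) (hSp : Srj n f p) :
    Srj n f 0 := by
  have main : ∀ k, k ≤ p → ∀ (d : ℕ → G) (b : G), ∃ z : ℕ → G,
      Fw n f (fun t => if t < p + 1 - k then z t else d t) = b := by
    intro k
    induction k with
    | zero =>
      intro _ d b
      obtain ⟨s, hs⟩ := hSp d b
      refine ⟨ins d p s, ?_⟩
      rw [show (fun t => if t < p + 1 - 0 then ins d p s t else d t) = ins d p s from ?_]
      · exact hs
      funext t
      rcases Nat.lt_or_ge t (p + 1) with h | h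
      · rw [if_pos (by omega)]
      · rw [if_neg (by omega), ins_ne _ _ (by omega)]
    | succ k ih =>
      intro hk d b
      obtain ⟨y, hy⟩ := ih (by omega) d b
      set m : ℕ := p - k with hm
      have hm1 : 1 ≤ m := by omega
      have hmp : m ≤ p := by omega
      have hrw : p + 1 - k = m + 1 := by omega
      rw [hrw] at hy
      obtain ⟨s, hs⟩ := hSp (fun t => if t = n - 1 then d m else g₀) (y m)
      set w : ℕ → G := fun t => if t = 0 then y (m - 1)
        else ins (fun t' => if t' = n - 1 then d m else g₀) p s (t - 1) with hw
      refine ⟨fun t => if t = m - 1 then Fw n f w else y t, ?_⟩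
      rw [show p + 1 - (k + 1) = m from by omega]
      show Fw n f (fun t => if t < m then if t = m - 1 then Fw n f w else y t else d t) = b
      set U : ℕ → G := fun t => if t < m - 1 then y t else if t - (m - 1) < n then
        w (t - (m - 1)) else d (t - (n - 1)) with hU
      have e1 : Fw n f (spl n f U (m - 1))
          = Fw n f (fun t => if t < m then if t = m - 1 then Fw n f w else y t else d t) := by
        apply Fw_congr
        intro s' hs'
        rcases Nat.lt_trichotomy s' (m - 1) with h | h | h
        · rw [spl_lt _ _ _ h, hU]
          try simp only []
          rw [if_pos h, if_pos (by omega), if_neg (by omega)]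
        · subst h
          rw [spl_self, if_pos (by omega), if_pos rfl]
          apply Fw_congr
          intro t ht
          rw [hU]
          try simp only []
          rw [if_neg (by omega), if_pos (by omega)]
          exact congrArg w (by omega)
        · rw [spl_gt _ _ _ h, hU]
          try simp only []
          rw [if_neg (by omega), if_neg (by omega), if_neg (show ¬ s' < m from by omega)]
          exact congrArg d (by omega)
      have e2 : Fw n f (spl n f U m)
          = Fw n f (fun t => if t < m + 1 then y t else d t) := by
        apply Fw_congr
        intro s' hs'
        rcases Nat.lt_trichotomy s' (m - 1) with h | h | h
        · rw [spl_lt _ _ _ (by omega), hU]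
          try simp only []
          rw [if_pos h, if_pos (by omega)]
        · subst h
          rw [spl_lt _ _ _ (by omega), hU]
          try simp only []
          rw [if_neg (by omega), if_pos (by omega), hw]
          try simp only []
          rw [if_pos (by omega), if_pos (by omega)]
        · rcases Nat.lt_trichotomy s' m with h' | h' | h'
          · omega
          · rw [h', spl_self, if_pos (by omega)]
            rw [show Fw n f (fun t => U (m + t)) = Fw n f (ins (fun t' =>
                if t' = n - 1 then d m else g₀) p s) from ?_]
            · rw [hs]
            apply Fw_congr
            intro t ht
            rcases Nat.lt_or_ge t (n - 1) with h'' | h''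
            · rw [hU]
              try simp only []
              rw [if_neg (by omega), if_pos (by omega), hw]
              try simp only []
              rw [if_neg (by omega)]
              exact congrArg (ins (fun t' => if t' = n - 1 then d m else g₀) p s) (by omega)
            · have ht' : t = n - 1 := by omega
              subst ht'
              rw [hU]
              try simp only []
              rw [if_neg (by omega), if_neg (by omega), ins_ne _ _ (by omega), if_pos rfl]
              exact congrArg d (by omega)
          · rw [spl_gt _ _ _ h', hU]
            try simp only []
            rw [if_neg (by omega), if_neg (by omega), if_neg (show ¬ s' < m + 1 from by omega)]
            exact congrArg d (by omega)
      have hadjm : IsAssocAt n f (m - 1) m := by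
        have := hadj (m - 1) (by omega) (by omega)
        rwa [show m - 1 + 1 = m from by omega] at this
      calc Fw n f (fun t => if t < m then if t = m - 1 then Fw n f w else y t else d t)
          = Fw n f (spl n f U (m - 1)) := e1.symm
        _ = Fw n f (spl n f U m) := asAt hadjm U
        _ = Fw n f (fun t => if t < m + 1 then y t else d t) := e2
        _ = b := hy
  intro c b
  obtain ⟨z, hz⟩ := main p le_rfl c b
  refine ⟨z 0, ?_⟩
  rw [show p + 1 - p = 1 from by omega] at hz
  rw [← hz]
  apply Fw_congr
  intro t ht
  rcases Nat.eq_zero_or_pos t with rfl | htp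
  · rw [ins_self, if_pos (by omega)]
  · rw [ins_ne _ _ (by omega), if_neg (by omega)]

end NG
namespace NG

variable {G : Type*}

lemma trivialNAry {n : ℕ} {f : (Fin n → G) → G} (hn : 0 < n) (hG : ¬ Nonempty G) :
    IsNAryGroup n f := by
  constructor
  · intro i j _ _ x
    exact absurd ⟨x 0⟩ hG
  · intro i _ x x₀
    exact absurd ⟨x₀⟩ hG

lemma caseA {n : ℕ} {f : (Fin n → G) → G} (hn : 2 < n) (h1 : IsAssocAt n f 0 1)
    (h2 : IsSolv n f (n - 1)) (h3 : IsUSolv n f 0) : IsNAryGroup n f := by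
  by_cases hG : Nonempty G
  · obtain ⟨g₀⟩ := hG
    have hI0 := usolv_inj h3
    have hS0 := usolv_srj h3
    have hSN := solv_srj h2
    have hadj0 : AdjFrom n f 0 := up hn g₀ 0 h1 hI0
    exact post hn g₀ hadj0 hS0 hSN
  · exact trivialNAry (by omega) hG

lemma caseB {n : ℕ} {f : (Fin n → G) → G} (hn : 2 < n)
    (h1 : IsAssocAt n f (n - 2) (n - 1)) (h2 : IsSolv n f 0) (h3 : IsUSolv n f (n - 1)) :
    IsNAryGroup n f := by
  by_cases hG : Nonempty G
  · obtain ⟨g₀⟩ := hG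
    have hIN := usolv_inj h3
    have hSN := usolv_srj h3
    have hS0 := solv_srj h2
    have base : AdjFrom n f (n - 2) := by
      intro k hk hk2
      have hke : k = n - 2 := by omega
      rw [hke, show n - 2 + 1 = n - 1 from by omega]
      exact h1
    have hadj0 : AdjFrom n f 0 := down hn g₀ (n - 1) (by omega) hIN (n - 2) (by omega) base
    exact post hn g₀ hadj0 hS0 hSN
  · exact trivialNAry (by omega) hG

lemma caseC {n : ℕ} {f : (Fin n → G) → G} (hn : 2 < n) (i : ℕ) (hi2 : 2 ≤ i)
    (hin : i ≤ n - 2) (h1 : IsAssocAt n f (i - 1) i) (h2 : IsUSolv n f (i - 1))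
    (j : ℕ) (hij : i < j) (hjn : j ≤ n) (h3 : IsUSolv n f (j - 1)) : IsNAryGroup n f := by
  by_cases hG : Nonempty G
  · obtain ⟨g₀⟩ := hG
    have hIp := usolv_inj h2
    have hSp := usolv_srj h2
    have hIq := usolv_inj h3
    have hA : IsAssocAt n f (i - 1) (i - 1 + 1) := by
      rw [show i - 1 + 1 = i from by omega]
      exact h1
    have hadjp : AdjFrom n f (i - 1) := up hn g₀ (i - 1) hA hIp
    have hadj0 : AdjFrom n f 0 :=
      down hn g₀ (j - 1) (by omega) hIq (i - 1) (by omega) hadjp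
    have hSN := Psrj hn hadj0 g₀ (i - 1) (by omega) (by omega) hSp
    have hS0 := Qsrj hn hadj0 g₀ (i - 1) (by omega) (by omega) hSp
    exact post hn g₀ hadj0 hS0 hSN
  · exact trivialNAry (by omega) hG

end NG


/-- Dudek–Głazek–Gleichgewicht, 1997.
An `n`-ary groupoid is an `n`-ary group iff one of the conditions (a), (b), (c) holds. -/
theorem nary_group_iff_axioms {G : Type*} (n : ℕ) (hn : 2 < n) (f : (Fin n → G) → G) :
    IsNAryGroup n f ↔
      ((IsAssocAt n f 0 1 ∧ IsSolv n f (n - 1) ∧ IsUSolv n f 0) ∨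
       (IsAssocAt n f (n - 2) (n - 1) ∧ IsSolv n f 0 ∧ IsUSolv n f (n - 1)) ∨
       (∃ i : ℕ, 2 ≤ i ∧ i ≤ n - 2 ∧ IsAssocAt n f (i - 1) i ∧ IsUSolv n f (i - 1) ∧
         ∃ j : ℕ, i < j ∧ j ≤ n ∧ IsUSolv n f (j - 1))) := by
  constructor
  · intro h
    refine Or.inl ⟨h.1 0 1 (by omega) (by omega), ?_, h.2 0 (by omega)⟩
    intro x x₀
    exact ((h.2 (n - 1) (by omega)) x x₀).exists
  · rintro (⟨ha, hs, hu⟩ | ⟨ha, hs, hu⟩ | ⟨i, hi2, hin, ha, hu, j, hij, hjn, hu'⟩)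
    · exact NG.caseA hn ha hs hu
    · exact NG.caseB hn ha hs hu
    · exact NG.caseC hn i hi2 hin ha hu j hij hjn hu'
end

section
/- Let n > 2. An n-ary semigroup (G,f) is an n-ary group if and only if for some k with 1 ≤ k ≤ n−2 and for all a_1,…,a_k ∈ G there exist elements x_{k+1},…,x_{n−1}, y_{k+1},…,y_{n−1} ∈ G such that f(a_1,…,a_k, x_{k+1},…,x_{n−1}, b) = b and f(b, y_{k+1},…,y_{n−1}, a_1,…,a_k) = b for all b ∈ G. -/
namespace NAryProof

variable {G : Type*}

def Fw (n : ℕ) (f : (Fin n → G) → G) (w : ℕ → G) : G := f (fun m : Fin n => w m)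

def glue (n : ℕ) (f : (Fin n → G) → G) (w : ℕ → G) (i : ℕ) : ℕ → G :=
  fun m => if m < i then w m else if m = i then Fw n f (fun t => w (i + t)) else w (m + n - 1)

lemma applyAt_eq (n : ℕ) (f : (Fin n → G) → G) (w : ℕ → G) (i : ℕ) :
    applyAt n f w i = Fw n f (glue n f w i) := rfl

lemma Fcongr {n : ℕ} {f : (Fin n → G) → G} {w1 w2 : ℕ → G}
    (h : ∀ m, m < n → w1 m = w2 m) : Fw n f w1 = Fw n f w2 := by
  unfold Fw; congr 1; funext m; exact h m m.isLt

lemma assocF {n : ℕ} {f : (Fin n → G) → G} (ha : IsNAssoc n f) {i j : ℕ}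
    (hi : i < n) (hj : j < n) (w : ℕ → G) :
    Fw n f (glue n f w i) = Fw n f (glue n f w j) := by
  have := ha i j hi hj w
  rwa [applyAt_eq, applyAt_eq] at this

/-- word with `z` at position `i`, `c` elsewhere -/
def cw (i : ℕ) (c : ℕ → G) (z : G) : ℕ → G := fun t => if t = i then z else c t

def ww (n j : ℕ) (LN RN : ℕ → G) (s : G) : ℕ → G :=
  fun t => if t < j then LN (n - 1 - j + t) else if t = j then s else RN (t - j - 1)

def lw (n k : ℕ) (a x : ℕ → G) (b : G) : ℕ → G :=
  fun t => if t < k then a t else if t < n - 1 then x t else b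

def rw (n k : ℕ) (y a : ℕ → G) (b : G) : ℕ → G :=
  fun t => if t = 0 then b else if t < n - k then y t else a (t - (n - k))

end NAryProof

namespace NAryProof


variable {G : Type*} {n : ℕ} {f : (Fin n → G) → G} {k : ℕ}

lemma Ssolv (hn : 2 < n) (ha : IsNAssoc n f) (hk1 : 1 ≤ k) (hk2 : k ≤ n - 2)
    (hid : ∀ a : ℕ → G, ∃ x y : ℕ → G, ∀ b : G,
      Fw n f (lw n k a x b) = b ∧ Fw n f (rw n k y a b) = b) :
    ∀ m, m ≤ n - 1 → ∀ (c : ℕ → G) (b : G),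
      ∃ u : ℕ → G, Fw n f (fun t => if t < m then c t else u t) = b := by
  intro m
  induction m using Nat.strong_induction_on with
  | _ m ih =>
    intro hm c b
    by_cases hmk : m ≤ k
    · obtain ⟨x, y, h⟩ := hid (fun i => if i < m then c i else b)
      refine ⟨fun t => if t < k then (if t < m then c t else b)
        else if t < n - 1 then x t else b, (Fcongr ?_).trans ((h b).1)⟩
      intro t ht
      simp only [lw]
      split_ifs <;> first | rfl | omega
    · push_neg at hmk
      obtain ⟨u', hu'⟩ := ih (m - k) (by omega) (by omega) c b
      obtain ⟨x, y, h⟩ := hid (fun i => c (m - k + i))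
      set W : ℕ → G := fun t => if t < m then c t
        else if t < m + n - 1 - k then x (t - (m - k)) else u' (t - (n - 1)) with hW
      have key := assocF ha (show m - k < n by omega) (show m < n by omega) W
      have e1 : Fw n f (glue n f W (m - k)) = Fw n f (fun t => if t < m - k then c t else u' t) := by
        apply Fcongr
        intro t ht
        by_cases h1 : t = m - k
        · subst h1
          have inner : Fw n f (fun s => W (m - k + s)) = u' (m - k) :=
            (Fcongr (by
              intro s hs
              simp only [lw, hW]
              split_ifs <;> first | rfl | omega | (congr 1; omega))).trans ((h (u' (m - k))).1)
          simpa [glue] using inner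
        · simp only [glue, hW]
          split_ifs <;> first | rfl | omega | (congr 1; omega)
      have e2 : Fw n f (glue n f W m) =
          Fw n f (fun t => if t < m then c t
            else (if t = m then Fw n f (fun s => W (m + s)) else u' t)) := by
        apply Fcongr
        intro t ht
        by_cases h1 : t = m
        · subst h1
          simp [glue]
        · simp only [glue, hW]
          split_ifs <;> first | rfl | omega | (congr 1; omega)
      refine ⟨fun t => if t = m then Fw n f (fun s => W (m + s)) else u' t, ?_⟩
      rw [← e2, ← key, e1, hu']



lemma Tsolv (hn : 2 < n) (ha : IsNAssoc n f) (hk1 : 1 ≤ k) (hk2 : k ≤ n - 2)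
    (hid : ∀ a : ℕ → G, ∃ x y : ℕ → G, ∀ b : G,
      Fw n f (lw n k a x b) = b ∧ Fw n f (rw n k y a b) = b) :
    ∀ m, m ≤ n - 1 → ∀ (c : ℕ → G) (b : G),
      ∃ u : ℕ → G, Fw n f (fun t => if t < n - m then u t else c t) = b := by
  intro m
  induction m using Nat.strong_induction_on with
  | _ m ih =>
    intro hm c b
    by_cases hmk : m ≤ k
    · obtain ⟨x, y, h⟩ := hid (fun i => c (n - k + i))
      refine ⟨fun t => if t = 0 then b else if t < n - k then y t else c t,
        (Fcongr ?_).trans ((h b).2)⟩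
      intro t ht
      simp only [rw]
      split_ifs <;> first | rfl | omega | (congr 1; omega)
    · push_neg at hmk
      obtain ⟨u', hu'⟩ := ih (m - k) (by omega) (by omega) c b
      obtain ⟨x, y, h⟩ := hid (fun i => c (n - m + i))
      set W : ℕ → G := fun t => if t < n - m + k then u' t
        else if t < 2 * n - m - 1 then y (t - (n - m + k - 1)) else c (t - (n - 1)) with hW
      have key := assocF ha (show n - m + k - 1 < n by omega) (show n - m - 1 < n by omega) W
      have e1 : Fw n f (glue n f W (n - m + k - 1)) =
          Fw n f (fun t => if t < n - m + k then u' t else c t) := by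
        apply Fcongr
        intro t ht
        by_cases h1 : t = n - m + k - 1
        · subst h1
          have inner : Fw n f (fun s => W (n - m + k - 1 + s)) = u' (n - m + k - 1) :=
            (Fcongr (by
              intro s hs
              simp only [rw, hW]
              split_ifs <;> first | rfl | omega | (congr 1; omega))).trans
              ((h (u' (n - m + k - 1))).2)
          have hg : glue n f W (n - m + k - 1) (n - m + k - 1) =
              Fw n f (fun s => W (n - m + k - 1 + s)) := by simp [glue]
          rw [hg, inner, if_pos (show n - m + k - 1 < n - m + k by omega)]
        · simp only [glue, hW]
          split_ifs <;> first | rfl | omega | (congr 1; omega)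
      have e2 : Fw n f (glue n f W (n - m - 1)) =
          Fw n f (fun t => if t < n - m then
            (if t < n - m - 1 then u' t else Fw n f (fun s => W (n - m - 1 + s))) else c t) := by
        apply Fcongr
        intro t ht
        simp only [glue, hW]
        split_ifs <;> first | rfl | omega | (congr 1; omega)
      refine ⟨fun t => if t < n - m - 1 then u' t else Fw n f (fun s => W (n - m - 1 + s)), ?_⟩
      have hu'' : Fw n f (fun t => if t < n - m + k then u' t else c t) = b :=
        (Fcongr (by intro t ht; split_ifs <;> first | rfl | omega)).trans hu'
      rw [← e2, ← key, e1, hu'']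
lemma group_of_div {H : Type*} (mul : H → H → H)
    (assoc : ∀ a b c, mul (mul a b) c = mul a (mul b c))
    (hr : ∀ a b, ∃ x, mul a x = b) (hl : ∀ a b, ∃ x, mul x a = b) (a₀ : H) :
    ∃ e, (∀ t, mul e t = t) ∧ (∀ t, mul t e = t) := by
  obtain ⟨e, he⟩ := hl a₀ a₀
  have lid : ∀ b, mul e b = b := by
    intro b
    obtain ⟨v, hv⟩ := hr a₀ b
    rw [← hv, ← assoc, he]
  obtain ⟨e', he'⟩ := hr a₀ a₀
  have rid : ∀ b, mul b e' = b := by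
    intro b
    obtain ⟨w, hw⟩ := hl a₀ b
    rw [← hw, assoc, he']
  have hee : e' = e := by rw [← lid e', rid e]
  exact ⟨e, lid, fun t => by rw [← hee]; exact rid t⟩

lemma eneut (hn : 2 < n) (ha : IsNAssoc n f) (hk1 : 1 ≤ k) (hk2 : k ≤ n - 2)
    (hid : ∀ a : ℕ → G, ∃ x y : ℕ → G, ∀ b : G,
      Fw n f (lw n k a x b) = b ∧ Fw n f (rw n k y a b) = b)
    (μ : ℕ → G) :
    ∃ e : G, (∀ t, Fw n f (fun s => if s = 0 then e else if s < n - 1 then μ s else t) = t) ∧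
             (∀ t, Fw n f (fun s => if s = 0 then t else if s < n - 1 then μ s else e) = t) := by
  have massoc : ∀ x y z : G,
      Fw n f (fun s => if s = 0 then Fw n f (fun s => if s = 0 then x else if s < n - 1 then μ s else y) else if s < n - 1 then μ s else z)
      = Fw n f (fun s => if s = 0 then x else if s < n - 1 then μ s else
          Fw n f (fun s => if s = 0 then y else if s < n - 1 then μ s else z)) := by
    intro x y z
    set W : ℕ → G := fun t => if t = 0 then x else if t < n - 1 then μ t
      else if t = n - 1 then y else if t < 2 * n - 2 then μ (t - (n - 1)) else z with hW
    have key := assocF ha (show 0 < n by omega) (show n - 1 < n by omega) W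
    have e1 : Fw n f (glue n f W 0) =
        Fw n f (fun s => if s = 0 then Fw n f (fun t => W (0 + t)) else if s < n - 1 then μ s else z) := by
      apply Fcongr
      intro t ht
      by_cases h1 : t = 0
      · subst h1; simp [glue]
      · simp only [glue, hW]
        split_ifs <;> first | rfl | omega | (congr 1; omega)
    have e2 : Fw n f (glue n f W (n - 1)) =
        Fw n f (fun s => if s = 0 then x else if s < n - 1 then μ s else
          Fw n f (fun t => W (n - 1 + t))) := by
      apply Fcongr
      intro t ht
      by_cases h1 : t = n - 1
      · subst h1
        have hg : glue n f W (n - 1) (n - 1) = Fw n f (fun t => W (n - 1 + t)) := by simp [glue]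
        rw [hg, if_neg (by omega), if_neg (by omega)]
      · simp only [glue, hW]
        split_ifs <;> first | rfl | omega | (congr 1; omega)
    have i1 : Fw n f (fun t => W (0 + t)) =
        Fw n f (fun s => if s = 0 then x else if s < n - 1 then μ s else y) := by
      apply Fcongr
      intro t ht
      simp only [hW]
      split_ifs <;> first | rfl | omega | (congr 1; omega)
    have i2 : Fw n f (fun t => W (n - 1 + t)) =
        Fw n f (fun s => if s = 0 then y else if s < n - 1 then μ s else z) := by
      apply Fcongr
      intro t ht
      simp only [hW]
      split_ifs <;> first | rfl | omega | (congr 1; omega)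
    calc Fw n f (fun s => if s = 0 then Fw n f (fun s => if s = 0 then x else if s < n - 1 then μ s else y) else if s < n - 1 then μ s else z)
        = Fw n f (fun s => if s = 0 then Fw n f (fun t => W (0 + t)) else if s < n - 1 then μ s else z) := by
          rw [i1]
      _ = Fw n f (glue n f W 0) := e1.symm
      _ = Fw n f (glue n f W (n - 1)) := key
      _ = Fw n f (fun s => if s = 0 then x else if s < n - 1 then μ s else Fw n f (fun t => W (n - 1 + t))) := e2
      _ = _ := by rw [i2]
  have hr : ∀ x b : G, ∃ zz, Fw n f (fun s => if s = 0 then x else if s < n - 1 then μ s else zz) = b := by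
    intro x b
    obtain ⟨u, hu⟩ := Ssolv hn ha hk1 hk2 hid (n - 1) (le_refl _) (fun t => if t = 0 then x else μ t) b
    exact ⟨u (n - 1), (Fcongr (by intro s hs; split_ifs <;> first | rfl | omega | (congr 1; omega))).trans hu⟩
  have hl : ∀ x b : G, ∃ zz, Fw n f (fun s => if s = 0 then zz else if s < n - 1 then μ s else x) = b := by
    intro x b
    obtain ⟨u, hu⟩ := Tsolv hn ha hk1 hk2 hid (n - 1) (le_refl _) (fun t => if t < n - 1 then μ t else x) b
    exact ⟨u 0, (Fcongr (by intro s hs; split_ifs <;> first | rfl | omega | (congr 1; omega))).trans hu⟩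
  obtain ⟨e, he1, he2⟩ := group_of_div
    (fun x y => Fw n f (fun s => if s = 0 then x else if s < n - 1 then μ s else y))
    massoc hr (fun a b => hl a b) (μ 0)
  exact ⟨e, he1, he2⟩

lemma LInj (hn : 2 < n) (ha : IsNAssoc n f) (hk1 : 1 ≤ k) (hk2 : k ≤ n - 2)
    (hid : ∀ a : ℕ → G, ∃ x y : ℕ → G, ∀ b : G,
      Fw n f (lw n k a x b) = b ∧ Fw n f (rw n k y a b) = b)
    (c : ℕ → G) (z z' : G)
    (h : Fw n f (cw (n - 1) c z) = Fw n f (cw (n - 1) c z')) : z = z' := by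
  obtain ⟨e, he1, _⟩ := eneut hn ha hk1 hk2 hid
    (fun s => if s = 1 then Fw n f (fun s => if s < n - 1 then c 0 else c 1) else c s)
  have claim : ∀ zz : G,
      Fw n f (fun s => if s = 0 then e else if s < n - 1 then c 0 else Fw n f (cw (n - 1) c zz))
        = zz := by
    intro zz
    set W : ℕ → G := fun t => if t = 0 then e else if t < n - 1 then c 0
      else if t < 2 * n - 2 then c (t - (n - 1)) else zz with hW
    have key := assocF ha (show 1 < n by omega) (show n - 1 < n by omega) W
    have i1 : Fw n f (fun t => W (n - 1 + t)) = Fw n f (cw (n - 1) c zz) := by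
      apply Fcongr
      intro t ht
      simp only [hW, cw]
      split_ifs <;> first | rfl | omega | (congr 1; omega)
    have e1 : Fw n f (fun s => if s = 0 then e else if s < n - 1 then c 0
        else Fw n f (cw (n - 1) c zz)) = Fw n f (glue n f W (n - 1)) := by
      apply Fcongr
      intro t ht
      by_cases h1 : t = n - 1
      · subst h1
        have hg : glue n f W (n - 1) (n - 1) = Fw n f (fun t => W (n - 1 + t)) := by simp [glue]
        rw [hg, i1, if_neg (by omega), if_neg (by omega)]
      · simp only [glue, hW]
        split_ifs <;> first | rfl | omega | (congr 1; omega)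
    have i2 : Fw n f (fun t => W (1 + t)) =
        Fw n f (fun s => if s < n - 1 then c 0 else c 1) := by
      apply Fcongr
      intro t ht
      simp only [hW]
      split_ifs <;> first | rfl | omega | (congr 1; omega)
    have e2 : Fw n f (glue n f W 1) =
        Fw n f (fun s => if s = 0 then e else if s < n - 1 then
          (if s = 1 then Fw n f (fun s => if s < n - 1 then c 0 else c 1) else c s) else zz) := by
      apply Fcongr
      intro t ht
      by_cases h1 : t = 1
      · subst h1
        have hg : glue n f W 1 1 = Fw n f (fun t => W (1 + t)) := by simp [glue]
        rw [hg, i2, if_neg (by omega), if_pos (by omega), if_pos rfl]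
      · simp only [glue, hW]
        split_ifs <;> first | rfl | omega | (congr 1; omega)
    rw [e1, ← key, e2]
    exact he1 zz
  rw [← claim z, ← claim z', h]

lemma FInj (hn : 2 < n) (ha : IsNAssoc n f) (hk1 : 1 ≤ k) (hk2 : k ≤ n - 2)
    (hid : ∀ a : ℕ → G, ∃ x y : ℕ → G, ∀ b : G,
      Fw n f (lw n k a x b) = b ∧ Fw n f (rw n k y a b) = b)
    (c : ℕ → G) (z z' : G)
    (h : Fw n f (cw 0 c z) = Fw n f (cw 0 c z')) : z = z' := by
  obtain ⟨e, _, he2⟩ := eneut hn ha hk1 hk2 hid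
    (fun s => if s = n - 2 then
      Fw n f (fun s => if s = 0 then c (n - 2) else if s = 1 then c (n - 1) else c 0) else c s)
  have claim : ∀ zz : G,
      Fw n f (fun s => if s = 0 then Fw n f (cw 0 c zz) else if s < n - 1 then c 0 else e)
        = zz := by
    intro zz
    set W : ℕ → G := fun t => if t = 0 then zz else if t < n then c t
      else if t < 2 * n - 2 then c 0 else e with hW
    have key := assocF ha (show 0 < n by omega) (show n - 2 < n by omega) W
    have i1 : Fw n f (fun t => W (0 + t)) = Fw n f (cw 0 c zz) := by
      apply Fcongr
      intro t ht
      simp only [hW, cw]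
      split_ifs <;> first | rfl | omega | (congr 1; omega)
    have e1 : Fw n f (fun s => if s = 0 then Fw n f (cw 0 c zz) else if s < n - 1 then c 0 else e)
        = Fw n f (glue n f W 0) := by
      apply Fcongr
      intro t ht
      by_cases h1 : t = 0
      · subst h1
        have hg : glue n f W 0 0 = Fw n f (fun t => W (0 + t)) := by simp [glue]
        rw [hg, i1, if_pos rfl]
      · simp only [glue, hW]
        split_ifs <;> first | rfl | omega | (congr 1; omega)
    have i2 : Fw n f (fun t => W (n - 2 + t)) =
        Fw n f (fun s => if s = 0 then c (n - 2) else if s = 1 then c (n - 1) else c 0) := by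
      apply Fcongr
      intro t ht
      simp only [hW]
      split_ifs <;> first | rfl | omega | (congr 1; omega)
    have e2 : Fw n f (glue n f W (n - 2)) =
        Fw n f (fun s => if s = 0 then zz else if s < n - 1 then
          (if s = n - 2 then
            Fw n f (fun s => if s = 0 then c (n - 2) else if s = 1 then c (n - 1) else c 0)
            else c s) else e) := by
      apply Fcongr
      intro t ht
      by_cases h1 : t = n - 2
      · subst h1
        have hg : glue n f W (n - 2) (n - 2) = Fw n f (fun t => W (n - 2 + t)) := by simp [glue]
        rw [hg, i2, if_neg (by omega), if_pos (by omega), if_pos rfl]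
      · simp only [glue, hW]
        split_ifs <;> first | rfl | omega | (congr 1; omega)
    rw [e1, key, e2]
    exact he2 zz
  rw [← claim z, ← claim z', h]

lemma redI (hn : 2 < n) (ha : IsNAssoc n f) (j : ℕ) (hj1 : 1 ≤ j) (hj2 : j ≤ n - 2)
    (c w : ℕ → G) (targ : G) :
    Fw n f (cw j c (Fw n f (fun s => if s < n - 1 then w s else targ))) =
    Fw n f (fun t => if t < n - 1 then (if t < j then c t else w (t - j)) else
      Fw n f (fun s => if s < j then w (n - 1 - j + s) else if s = j then targ else c s)) := by
  set U : ℕ → G := fun t => if t < j then c t else if t < j + n - 1 then w (t - j)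
    else if t = j + n - 1 then targ else c (t - (n - 1)) with hU
  have key := assocF ha (show j < n by omega) (show n - 1 < n by omega) U
  have e1 : Fw n f (glue n f U j) =
      Fw n f (cw j c (Fw n f (fun s => if s < n - 1 then w s else targ))) := by
    apply Fcongr; intro t ht
    by_cases h1 : t = j
    · rw [h1]
      have hg : glue n f U j j = Fw n f (fun r => U (j + r)) := by simp [glue]
      have i1 : Fw n f (fun r => U (j + r)) =
          Fw n f (fun s => if s < n - 1 then w s else targ) := by
        apply Fcongr; intro r hr
        simp only [hU]
        split_ifs <;> first | rfl | omega | (congr 1; omega)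
      rw [hg, i1]
      simp [cw]
    · simp only [glue, hU, cw]
      split_ifs <;> first | rfl | omega | (congr 1; omega)
  have e2 : Fw n f (glue n f U (n - 1)) =
      Fw n f (fun t => if t < n - 1 then (if t < j then c t else w (t - j)) else
        Fw n f (fun s => if s < j then w (n - 1 - j + s) else if s = j then targ else c s)) := by
    apply Fcongr; intro t ht
    by_cases h1 : t = n - 1
    · subst h1
      have hg : glue n f U (n - 1) (n - 1) = Fw n f (fun r => U (n - 1 + r)) := by simp [glue]
      have i2 : Fw n f (fun r => U (n - 1 + r)) =
          Fw n f (fun s => if s < j then w (n - 1 - j + s) else if s = j then targ else c s) := by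
        apply Fcongr; intro r hr
        simp only [hU]
        split_ifs <;> first | rfl | omega | (congr 1; omega)
      rw [hg, i2, if_neg (by omega)]
    · simp only [glue, hU]
      split_ifs <;> first | rfl | omega | (congr 1; omega)
  rw [← e1, ← e2]; exact key

lemma redII (hn : 2 < n) (ha : IsNAssoc n f) (j : ℕ) (hj1 : 1 ≤ j) (hj2 : j ≤ n - 2)
    (p v c : ℕ → G) (y : G) :
    Fw n f (fun t => if t < j then p t else if t = j then
        Fw n f (fun s => if s = 0 then y else v s) else c t)
    = Fw n f (fun t => if t < j then p t else if t = j then y else if t < n - 1 then v (t - j)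
        else Fw n f (fun s => if s < j + 1 then v (n - 1 - j + s) else c s)) := by
  set U : ℕ → G := fun t => if t < j then p t else if t = j then y
    else if t < j + n then v (t - j) else c (t - (n - 1)) with hU
  have key := assocF ha (show j < n by omega) (show n - 1 < n by omega) U
  have e1 : Fw n f (glue n f U j) =
      Fw n f (fun t => if t < j then p t else if t = j then
        Fw n f (fun s => if s = 0 then y else v s) else c t) := by
    apply Fcongr; intro t ht
    by_cases h1 : t = j
    · rw [h1]
      have hg : glue n f U j j = Fw n f (fun r => U (j + r)) := by simp [glue]
      have i1 : Fw n f (fun r => U (j + r)) =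
          Fw n f (fun s => if s = 0 then y else v s) := by
        apply Fcongr; intro r hr
        simp only [hU]
        split_ifs <;> first | rfl | omega | (congr 1; omega)
      rw [hg, i1, if_neg (by omega), if_pos rfl]
    · simp only [glue, hU]
      split_ifs <;> first | rfl | omega | (congr 1; omega)
  have e2 : Fw n f (glue n f U (n - 1)) =
      Fw n f (fun t => if t < j then p t else if t = j then y else if t < n - 1 then v (t - j)
        else Fw n f (fun s => if s < j + 1 then v (n - 1 - j + s) else c s)) := by
    apply Fcongr; intro t ht
    by_cases h1 : t = n - 1
    · subst h1
      have hg : glue n f U (n - 1) (n - 1) = Fw n f (fun r => U (n - 1 + r)) := by simp [glue]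
      have i2 : Fw n f (fun r => U (n - 1 + r)) =
          Fw n f (fun s => if s < j + 1 then v (n - 1 - j + s) else c s) := by
        apply Fcongr; intro r hr
        simp only [hU]
        split_ifs <;> first | rfl | omega | (congr 1; omega)
      rw [hg, i2, if_neg (by omega), if_neg (by omega), if_neg (by omega)]
    · simp only [glue, hU]
      split_ifs <;> first | rfl | omega | (congr 1; omega)
  rw [← e1, ← e2]; exact key

lemma Wrec (hn : 2 < n) (ha : IsNAssoc n f) (hk1 : 1 ≤ k) (hk2 : k ≤ n - 2)
    (hid : ∀ a : ℕ → G, ∃ x y : ℕ → G, ∀ b : G,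
      Fw n f (lw n k a x b) = b ∧ Fw n f (rw n k y a b) = b)
    (j : ℕ) (hj1 : 1 ≤ j) (hj2 : j ≤ n - 2) (μ : ℕ → G) :
    ∃ LN RN : ℕ → G, ∀ s : G,
      Fw n f (fun t => if t < n - 1 - j then LN t else if t = n - 1 - j then
        Fw n f (ww n j LN RN s) else RN (t - 1)) = s := by
  obtain ⟨e, he1, he2⟩ := eneut hn ha hk1 hk2 hid μ
  set LN : ℕ → G := fun t => if t = 0 then e else μ t with hLN
  set RN : ℕ → G := fun t => if t < n - 2 then μ (t + 1) else e with hRN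
  refine ⟨LN, RN, ?_⟩
  intro s
  set U : ℕ → G := fun t => if t < n - 1 then LN t else if t = n - 1 then s else RN (t - n) with hU
  have key := assocF ha (show n - 1 - j < n by omega) (show n - 1 < n by omega) U
  have e1 : Fw n f (glue n f U (n - 1)) = s := by
    have i1 : Fw n f (fun r => U (n - 1 + r)) =
        Fw n f (fun r => if r = 0 then s else if r < n - 1 then μ r else e) := by
      apply Fcongr; intro r hr
      simp only [hU, hRN]
      split_ifs <;> first | rfl | omega | (congr 1; omega)
    have step : Fw n f (glue n f U (n - 1)) =
        Fw n f (fun t => if t = 0 then e else if t < n - 1 then μ t else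
          Fw n f (fun r => if r = 0 then s else if r < n - 1 then μ r else e)) := by
      apply Fcongr; intro t ht
      by_cases h1 : t = n - 1
      · subst h1
        have hg : glue n f U (n - 1) (n - 1) = Fw n f (fun r => U (n - 1 + r)) := by simp [glue]
        rw [hg, i1, if_neg (by omega), if_neg (by omega)]
      · simp only [glue, hU, hLN]
        split_ifs <;> first | rfl | omega | (congr 1; omega)
    rw [step, he1]
    exact he2 s
  have e2 : Fw n f (glue n f U (n - 1 - j)) =
      Fw n f (fun t => if t < n - 1 - j then LN t else if t = n - 1 - j then
        Fw n f (ww n j LN RN s) else RN (t - 1)) := by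
    apply Fcongr; intro t ht
    by_cases h1 : t = n - 1 - j
    · subst h1
      have hg : glue n f U (n - 1 - j) (n - 1 - j) =
          Fw n f (fun r => U (n - 1 - j + r)) := by simp [glue]
      have i2 : Fw n f (fun r => U (n - 1 - j + r)) = Fw n f (ww n j LN RN s) := by
        apply Fcongr; intro r hr
        simp only [hU, ww]
        split_ifs <;> first | rfl | omega | (congr 1; omega)
      rw [hg, i2, if_neg (by omega), if_pos rfl]
    · simp only [glue, hU]
      split_ifs <;> first | rfl | omega | (congr 1; omega)
  exact e2.symm.trans (key.trans e1)

lemma MSurj (hn : 2 < n) (ha : IsNAssoc n f) (hk1 : 1 ≤ k) (hk2 : k ≤ n - 2)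
    (hid : ∀ a : ℕ → G, ∃ x y : ℕ → G, ∀ b : G,
      Fw n f (lw n k a x b) = b ∧ Fw n f (rw n k y a b) = b)
    (j : ℕ) (hj1 : 1 ≤ j) (hj2 : j ≤ n - 2) (c : ℕ → G) (b : G) :
    ∃ z, Fw n f (cw j c z) = b := by
  obtain ⟨u₃, hu₃⟩ := Ssolv hn ha hk1 hk2 hid j (by omega) c b
  obtain ⟨u₄, hu₄⟩ := Tsolv hn ha hk1 hk2 hid (n - 1 - j) (by omega) c (u₃ (n - 1))
  set w : ℕ → G := fun s => if s < n - 1 - j then u₃ (j + s) else u₄ (s - (n - 1 - j)) with hw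
  refine ⟨Fw n f (fun s => if s < n - 1 then w s else u₄ j), ?_⟩
  rw [redI hn ha j hj1 hj2 c w (u₄ j)]
  have hM : Fw n f (fun s => if s < j then w (n - 1 - j + s) else if s = j then u₄ j else c s)
      = u₃ (n - 1) := by
    refine (Fcongr ?_).trans hu₄
    intro s hs
    simp only [hw]
    split_ifs <;> first | rfl | omega | (congr 1; omega)
  refine (Fcongr ?_).trans hu₃
  intro t ht
  by_cases h1 : t = n - 1
  · rw [h1]
    split_ifs <;> first | omega | exact hM
  · simp only [hw]
    split_ifs <;> first | rfl | omega | (congr 1; omega)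

lemma MInj (hn : 2 < n) (ha : IsNAssoc n f) (hk1 : 1 ≤ k) (hk2 : k ≤ n - 2)
    (hid : ∀ a : ℕ → G, ∃ x y : ℕ → G, ∀ b : G,
      Fw n f (lw n k a x b) = b ∧ Fw n f (rw n k y a b) = b)
    (j : ℕ) (hj1 : 1 ≤ j) (hj2 : j ≤ n - 2) (c : ℕ → G) (z z' : G)
    (h : Fw n f (cw j c z) = Fw n f (cw j c z')) : z = z' := by
  obtain ⟨LN, RN, hrec⟩ := Wrec hn ha hk1 hk2 hid j hj1 hj2 (fun _ => z)
  have winj : ∀ s s' : G, Fw n f (ww n j LN RN s) = Fw n f (ww n j LN RN s') → s = s' := by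
    intro s s' hss
    have h1 := hrec s
    simp only [hss] at h1
    exact h1.symm.trans (hrec s')
  set p : ℕ → G := fun t => LN (n - 1 - j + t) with hp
  obtain ⟨u₀, hu₀⟩ := Tsolv hn ha hk1 hk2 hid (n - 1 - j) (by omega) c (RN (n - 2 - j))
  set v : ℕ → G := fun t => if t < n - 1 - j then RN (t - 1) else u₀ (t - (n - 1 - j)) with hv
  have hR : Fw n f (fun s => if s < j + 1 then v (n - 1 - j + s) else c s) = RN (n - 2 - j) := by
    refine (Fcongr ?_).trans hu₀
    intro s hs
    simp only [hv]
    split_ifs <;> first | rfl | omega | (congr 1; omega)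
  have hMV : ∀ y : G, Fw n f (fun t => if t < j then p t else if t = j then
      Fw n f (fun s => if s = 0 then y else v s) else c t) = Fw n f (ww n j LN RN y) := by
    intro y
    rw [redII hn ha j hj1 hj2 p v c y]
    apply Fcongr
    intro t ht
    by_cases h1 : t = n - 1
    · rw [h1]
      simp only [ww]
      split_ifs <;> first | omega | (exact hR.trans (by congr 1; omega))
    · simp only [hp, hv, ww]
      split_ifs <;> first | rfl | omega | (congr 1; omega)
  have hS' : ∀ g : G, ∃ yy, Fw n f (fun s => if s = 0 then yy else v s) = g := by
    intro g
    obtain ⟨u, hu⟩ := Tsolv hn ha hk1 hk2 hid (n - 1) (le_refl _) v g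
    exact ⟨u 0, (Fcongr (by
      intro s hs
      split_ifs <;> first | rfl | omega | (congr 1; omega))).trans hu⟩
  have minj : ∀ a b : G, Fw n f (fun t => if t < j then p t else if t = j then a else c t) =
      Fw n f (fun t => if t < j then p t else if t = j then b else c t) → a = b := by
    intro a b hab
    obtain ⟨ya, hya⟩ := hS' a
    obtain ⟨yb, hyb⟩ := hS' b
    have hw : Fw n f (ww n j LN RN ya) = Fw n f (ww n j LN RN yb) := by
      rw [← hMV ya, ← hMV yb]
      simp only [hya, hyb]
      exact hab
    have hyy := winj ya yb hw
    rw [← hya, ← hyb, hyy]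
  set w : ℕ → G := fun s => if s < n - 1 - j then c 0 else p (s - (n - 1 - j)) with hw2
  have hMinner : ∀ targ : G,
      Fw n f (fun s => if s < j then w (n - 1 - j + s) else if s = j then targ else c s)
      = Fw n f (fun t => if t < j then p t else if t = j then targ else c t) := by
    intro targ
    apply Fcongr; intro s hs
    simp only [hw2]
    split_ifs <;> first | rfl | omega | (congr 1; omega)
  have hSl : ∀ zz : G, ∃ targ, Fw n f (fun s => if s < n - 1 then w s else targ) = zz := by
    intro zz
    obtain ⟨u, hu⟩ := Ssolv hn ha hk1 hk2 hid (n - 1) (le_refl _) w zz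
    exact ⟨u (n - 1), (Fcongr (by
      intro s hs
      split_ifs <;> first | rfl | omega | (congr 1; omega))).trans hu⟩
  obtain ⟨ta, hta⟩ := hSl z
  obtain ⟨tb, htb⟩ := hSl z'
  have key : ∀ (targ : G) (zz : G), Fw n f (fun s => if s < n - 1 then w s else targ) = zz →
      Fw n f (cw j c zz) = Fw n f (cw (n - 1) (fun t => if t < j then c t else w (t - j))
        (Fw n f (fun t => if t < j then p t else if t = j then targ else c t))) := by
    intro targ zz hzz
    rw [← hzz, redI hn ha j hj1 hj2 c w targ]
    apply Fcongr
    intro t ht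
    by_cases h1 : t = n - 1
    · rw [h1]
      simp only [cw]
      split_ifs <;> first | omega | exact hMinner targ
    · simp only [cw]
      split_ifs <;> first | rfl | omega
  have ka := key ta z hta
  have kb := key tb z' htb
  rw [h] at ka
  have hOM := LInj hn ha hk1 hk2 hid (fun t => if t < j then c t else w (t - j)) _ _
    (ka.symm.trans kb)
  have := minj ta tb hOM
  rw [← hta, ← htb, this]

lemma toGroup (hn : 2 < n) (ha : IsNAssoc n f) (hk1 : 1 ≤ k) (hk2 : k ≤ n - 2)
    (hid : ∀ a : ℕ → G, ∃ x y : ℕ → G, ∀ b : G,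
      Fw n f (lw n k a x b) = b ∧ Fw n f (rw n k y a b) = b) :
    IsNAryGroup n f := by
  have surj : ∀ i, i < n → ∀ (c : ℕ → G) (b : G), ∃ z, Fw n f (cw i c z) = b := by
    intro i hi c b
    by_cases h0 : i = 0
    · subst h0
      obtain ⟨u, hu⟩ := Tsolv hn ha hk1 hk2 hid (n - 1) (le_refl _) c b
      refine ⟨u 0, (Fcongr ?_).trans hu⟩
      intro t ht
      simp only [cw]
      split_ifs <;> first | rfl | omega | (congr 1; omega)
    · by_cases h1 : i = n - 1
      · subst h1
        obtain ⟨u, hu⟩ := Ssolv hn ha hk1 hk2 hid (n - 1) (le_refl _) c b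
        refine ⟨u (n - 1), (Fcongr ?_).trans hu⟩
        intro t ht
        simp only [cw]
        split_ifs <;> first | rfl | omega | (congr 1; omega)
      · exact MSurj hn ha hk1 hk2 hid i (by omega) (by omega) c b
  have inj : ∀ i, i < n → ∀ (c : ℕ → G) (z z' : G),
      Fw n f (cw i c z) = Fw n f (cw i c z') → z = z' := by
    intro i hi c z z' hzz
    by_cases h0 : i = 0
    · subst h0; exact FInj hn ha hk1 hk2 hid c z z' hzz
    · by_cases h1 : i = n - 1
      · subst h1; exact LInj hn ha hk1 hk2 hid c z z' hzz
      · exact MInj hn ha hk1 hk2 hid i (by omega) (by omega) c z z' hzz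
  refine ⟨ha, ?_⟩
  intro i hi x x₀
  set c : ℕ → G := fun t => if h : t < n then x ⟨t, h⟩ else x ⟨0, by omega⟩ with hc
  have hcv : ∀ z : G, f (fun m : Fin n => if (m : ℕ) = i then z else x m)
      = Fw n f (cw i c z) := by
    intro z
    unfold Fw
    congr 1
    funext m
    by_cases hm : (m : ℕ) = i
    · simp [cw, hm]
    · simp [cw, hm, hc, dif_pos m.isLt]
  obtain ⟨z, hz⟩ := surj i hi c x₀
  refine ⟨z, (hcv z).trans hz, ?_⟩
  intro z' hz'
  exact inj i hi c z' z (((hcv z').symm.trans hz').trans hz.symm)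

lemma ofGroup (hn : 2 < n) (hgrp : IsNAryGroup n f) (a : ℕ → G) :
    ∃ x y : ℕ → G, ∀ b : G, Fw n f (lw n 1 a x b) = b ∧ Fw n f (rw n 1 y a b) = b := by
  obtain ⟨ha, hsolv⟩ := hgrp
  obtain ⟨z₁, hz₁, -⟩ := hsolv (n - 2) (by omega) (fun _ => a 0) (a 0)
  obtain ⟨z₂, hz₂, -⟩ := hsolv 1 (by omega) (fun _ => a 0) (a 0)
  have hz₁' : Fw n f (cw (n - 2) (fun _ => a 0) z₁) = a 0 := hz₁
  have hz₂' : Fw n f (cw 1 (fun _ => a 0) z₂) = a 0 := hz₂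
  have leftNeut : ∀ b : G,
      Fw n f (fun t => if t = n - 2 then z₁ else if t = n - 1 then b else a 0) = b := by
    intro b
    obtain ⟨s, hs, -⟩ := hsolv (n - 1) (by omega) (fun _ => a 0) b
    have hs' : Fw n f (cw (n - 1) (fun _ => a 0) s) = b := hs
    set U : ℕ → G := fun t => if t = n - 2 then z₁ else if t = 2 * n - 2 then s else a 0 with hU
    have key := assocF ha (show 0 < n by omega) (show n - 1 < n by omega) U
    have e1 : Fw n f (glue n f U 0) = b := by
      refine (Fcongr ?_).trans hs'
      intro t ht
      by_cases h1 : t = 0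
      · rw [h1]
        have hg : glue n f U 0 0 = Fw n f (fun r => U (0 + r)) := by simp [glue]
        have i1 : Fw n f (fun r => U (0 + r)) = Fw n f (cw (n - 2) (fun _ => a 0) z₁) := by
          apply Fcongr; intro r hr
          simp only [hU, cw]
          split_ifs <;> first | rfl | omega
        rw [hg, i1, hz₁', cw, if_neg (by omega)]
      · simp only [glue, hU, cw]
        split_ifs <;> first | rfl | omega
    have e2 : Fw n f (glue n f U (n - 1)) =
        Fw n f (fun t => if t = n - 2 then z₁ else if t = n - 1 then b else a 0) := by
      apply Fcongr
      intro t ht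
      by_cases h1 : t = n - 1
      · subst h1
        have hg : glue n f U (n - 1) (n - 1) = Fw n f (fun r => U (n - 1 + r)) := by simp [glue]
        have i1 : Fw n f (fun r => U (n - 1 + r)) = Fw n f (cw (n - 1) (fun _ => a 0) s) := by
          apply Fcongr; intro r hr
          simp only [hU, cw]
          split_ifs <;> first | rfl | omega
        rw [hg, i1, hs', if_neg (by omega), if_pos rfl]
      · simp only [glue, hU]
        split_ifs <;> first | rfl | omega
    rw [← e2, ← key, e1]
  have rightNeut : ∀ b : G,
      Fw n f (fun t => if t = 0 then b else if t = 1 then z₂ else a 0) = b := by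
    intro b
    obtain ⟨s, hs, -⟩ := hsolv 0 (by omega) (fun _ => a 0) b
    have hs' : Fw n f (cw 0 (fun _ => a 0) s) = b := hs
    set U : ℕ → G := fun t => if t = 0 then s else if t = n then z₂ else a 0 with hU
    have key := assocF ha (show 0 < n by omega) (show n - 1 < n by omega) U
    have e1 : Fw n f (glue n f U 0) =
        Fw n f (fun t => if t = 0 then b else if t = 1 then z₂ else a 0) := by
      apply Fcongr
      intro t ht
      by_cases h1 : t = 0
      · rw [h1]
        have hg : glue n f U 0 0 = Fw n f (fun r => U (0 + r)) := by simp [glue]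
        have i1 : Fw n f (fun r => U (0 + r)) = Fw n f (cw 0 (fun _ => a 0) s) := by
          apply Fcongr; intro r hr
          simp only [hU, cw]
          split_ifs <;> first | rfl | omega
        rw [hg, i1, hs', if_pos rfl]
      · simp only [glue, hU]
        split_ifs <;> first | rfl | omega
    have e2 : Fw n f (glue n f U (n - 1)) = b := by
      refine (Fcongr ?_).trans hs'
      intro t ht
      by_cases h1 : t = n - 1
      · subst h1
        have hg : glue n f U (n - 1) (n - 1) = Fw n f (fun r => U (n - 1 + r)) := by simp [glue]
        have i1 : Fw n f (fun r => U (n - 1 + r)) = Fw n f (cw 1 (fun _ => a 0) z₂) := by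
          apply Fcongr; intro r hr
          simp only [hU, cw]
          split_ifs <;> first | rfl | omega
        rw [hg, i1, hz₂', cw, if_neg (by omega)]
      · simp only [glue, hU, cw]
        split_ifs <;> first | rfl | omega
    rw [e1] at key
    exact key.trans e2
  refine ⟨fun t => if t = n - 2 then z₁ else a 0, fun t => if t = 1 then z₂ else a 0, ?_⟩
  intro b
  constructor
  · refine (Fcongr ?_).trans (leftNeut b)
    intro t ht
    simp only [lw]
    split_ifs <;> first | rfl | omega | (congr 1; omega)
  · refine (Fcongr ?_).trans (rightNeut b)
    intro t ht
    simp only [NAryProof.rw]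
    split_ifs <;> first | rfl | omega | (congr 1; omega)

end NAryProof

/-- Celakoski 1977; Dudek–Groździńska 1979.
An `n`-ary semigroup is an `n`-ary group iff for some `1 ≤ k ≤ n-2` and all
`a₁,…,a_k` there are `x_{k+1},…,x_{n-1}` and `y_{k+1},…,y_{n-1}` such that
`f(a₁,…,a_k,x_{k+1},…,x_{n-1},b) = b = f(b,y_{k+1},…,y_{n-1},a₁,…,a_k)` for all `b`. -/
theorem nary_group_iff_local_identities {G : Type*} (n : ℕ) (hn : 2 < n)
    (f : (Fin n → G) → G) (hassoc : IsNAssoc n f) :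
    IsNAryGroup n f ↔
      ∃ k : ℕ, 1 ≤ k ∧ k ≤ n - 2 ∧ ∀ a : ℕ → G, ∃ x y : ℕ → G, ∀ b : G,
        f (fun m => if (m : ℕ) < k then a (m : ℕ)
            else if (m : ℕ) < n - 1 then x (m : ℕ) else b) = b ∧
        f (fun m => if (m : ℕ) = 0 then b
            else if (m : ℕ) < n - k then y (m : ℕ) else a ((m : ℕ) - (n - k))) = b := by
  constructor
  · intro hgrp
    refine ⟨1, le_refl 1, by omega, ?_⟩
    intro a
    obtain ⟨x, y, hxy⟩ := NAryProof.ofGroup hn hgrp a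
    exact ⟨x, y, hxy⟩
  · rintro ⟨k, hk1, hk2, hid⟩
    exact NAryProof.toGroup hn hassoc hk1 hk2 hid
end

section
/- Let n > 2. An n-ary semigroup (G,f) is an n-ary group if and only if for some i, j with 1 ≤ i, j ≤ n−1 and for all a, b ∈ G there exist x, y ∈ G such that f(x, b,…,b, a,…,a) = b (with i−1 copies of b followed by n−i copies of a) and f(a,…,a, b,…,b, y) = b (with n−j copies of a followed by j−1 copies of b). -/
section Helpers

set_option linter.unreachableTactic false
set_option linter.unusedTactic false

lemma fcongr {G : Type*} {n : ℕ} (f : (Fin n → G) → G) {u v : Fin n → G}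
    (h : ∀ m : Fin n, u m = v m) : f u = f v := congrArg f (funext h)

lemma finApp {G : Type*} {n : ℕ} (w : Fin n → G) (e : ℕ) (p : e < n) (m : Fin n)
    (h : e = (m : ℕ)) : w ⟨e, p⟩ = w m := congrArg w (Fin.ext h)

lemma finAppNat {G : Type*} {n : ℕ} (w : Fin n → G) {e e' : ℕ} (p : e < n) (p' : e' < n)
    (h : e = e') : w ⟨e, p⟩ = w ⟨e', p'⟩ := by subst h; rfl

lemma assoc_step {G : Type*} {n : ℕ} (f : (Fin n → G) → G) (hassoc : IsNAssoc n f)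
    (x : ℕ → G) {k l : ℕ} (hk : k < n) (hl : l < n)
    {gk gl : Fin n → G} {ik il : G}
    (hik : f (fun t : Fin n => x (k + (t : ℕ))) = ik)
    (hil : f (fun t : Fin n => x (l + (t : ℕ))) = il)
    (hgk : ∀ m : Fin n, gk m = if (m : ℕ) < k then x (m : ℕ) else if (m : ℕ) = k then ik
      else x ((m : ℕ) + n - 1))
    (hgl : ∀ m : Fin n, gl m = if (m : ℕ) < l then x (m : ℕ) else if (m : ℕ) = l then il
      else x ((m : ℕ) + n - 1)) :
    f gk = f gl := by
  have e1 : gk = fun m : Fin n => if (m : ℕ) < k then x (m : ℕ) else if (m : ℕ) = k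
      then f (fun t : Fin n => x (k + (t : ℕ))) else x ((m : ℕ) + n - 1) := by
    funext m; rw [hgk m, hik]
  have e2 : gl = fun m : Fin n => if (m : ℕ) < l then x (m : ℕ) else if (m : ℕ) = l
      then f (fun t : Fin n => x (l + (t : ℕ))) else x ((m : ℕ) + n - 1) := by
    funext m; rw [hgl m, hil]
  rw [e1, e2]
  exact hassoc k l hk hl x

section MasterSteps

variable {G : Type*} {n : ℕ} (hn : 2 < n) (f : (Fin n → G) → G)
  (hassoc : IsNAssoc n f) {i j : ℕ} (hi1 : 1 ≤ i) (hi2 : i ≤ n - 1)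
  (hj1 : 1 ≤ j) (hj2 : j ≤ n - 1) (a₀ v₀ u₀ : G)

set_option linter.unusedSectionVars false

include hn hi1 hi2 hj1 hj2 hassoc

lemma mSr
    (HL : ∀ a b : G, ∃ x, f (fun m : Fin n => if (m : ℕ) = 0 then x else if (m : ℕ) < i then b else a) = b) :
    ∀ c b : G, ∃ w : Fin n → G, (∀ m : Fin n, (m : ℕ) = n - 1 → w m = c) ∧ f w = b := by
  intro c b
  obtain ⟨xx, hxx⟩ := HL c b
  refine ⟨_, fun m hm => ?_, hxx⟩
  split_ifs <;> first | rfl | omega | (exfalso; omega)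

lemma mSl
    (HR : ∀ a b : G, ∃ y, f (fun m : Fin n => if (m : ℕ) < n - j then a else if (m : ℕ) < n - 1 then b else y) = b) :
    ∀ c b : G, ∃ w : Fin n → G, (∀ m : Fin n, (m : ℕ) = 0 → w m = c) ∧ f w = b := by
  intro c b
  obtain ⟨yy, hyy⟩ := HR c b
  refine ⟨_, fun m hm => ?_, hyy⟩
  split_ifs <;> first | rfl | omega | (exfalso; omega)

lemma mRN
    (hv₀ : f (fun m : Fin n => if (m : ℕ) < n - j then a₀ else if (m : ℕ) < n - 1 then a₀ else v₀) = a₀)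
    (Sr : ∀ c b : G, ∃ w : Fin n → G, (∀ m : Fin n, (m : ℕ) = n - 1 → w m = c) ∧ f w = b) :
    ∀ z : G, f (fun m : Fin n => if (m : ℕ) = 0 then z else if (m : ℕ) < n - 1 then a₀ else v₀) = z := by
  intro z
  obtain ⟨w, hwl, hwv⟩ := Sr a₀ z
  set X : ℕ → G := fun t => if h : t < n - 1 then w ⟨t, by omega⟩ else if t < 2 * n - 2 then a₀ else v₀ with hX
  have hik : f (fun t : Fin n => X (n - 1 + (t : ℕ))) = a₀ := by
    have e : (fun t : Fin n => X (n - 1 + (t : ℕ)))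
        = fun m : Fin n => if (m : ℕ) < n - j then a₀ else if (m : ℕ) < n - 1 then a₀ else v₀ := by
      funext t; have ht := t.isLt; simp only [hX]
      split_ifs <;> first | rfl | omega | (exfalso; omega)
    rw [e]; exact hv₀
  have hil : f (fun t : Fin n => X (0 + (t : ℕ))) = z := by
    have e : (fun t : Fin n => X (0 + (t : ℕ))) = w := by
      funext t; have ht := t.isLt; simp only [hX]
      split_ifs <;> first | (exfalso; omega) | exact finApp w _ _ t (by omega) | exact (hwl t (by omega)).symm
    rw [e]; exact hwv
  have hgk : ∀ m : Fin n, w m = if (m : ℕ) < n - 1 then X (m : ℕ) else if (m : ℕ) = n - 1 then a₀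
      else X ((m : ℕ) + n - 1) := by
    intro m; have hm := m.isLt; simp only [hX]
    split_ifs <;> first | omega | (exfalso; omega) | exact (finApp w _ _ m rfl).symm | exact hwl m (by omega)
  have hgl : ∀ m : Fin n, (if (m : ℕ) = 0 then z else if (m : ℕ) < n - 1 then a₀ else v₀)
      = if (m : ℕ) < 0 then X (m : ℕ) else if (m : ℕ) = 0 then z else X ((m : ℕ) + n - 1) := by
    intro m; have hm := m.isLt; simp only [hX]
    split_ifs <;> first | rfl | omega | (exfalso; omega)
  have key := assoc_step f hassoc X (show n - 1 < n by omega) (show 0 < n by omega) hik hil hgk hgl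
  exact key.symm.trans hwv

lemma mLN
    (hu₀ : f (fun m : Fin n => if (m : ℕ) = 0 then u₀ else if (m : ℕ) < i then a₀ else a₀) = a₀)
    (Sl : ∀ c b : G, ∃ w : Fin n → G, (∀ m : Fin n, (m : ℕ) = 0 → w m = c) ∧ f w = b) :
    ∀ z : G, f (fun m : Fin n => if (m : ℕ) = 0 then u₀ else if (m : ℕ) < n - 1 then a₀ else z) = z := by
  intro z
  obtain ⟨w, hw0, hwv⟩ := Sl a₀ z
  set X : ℕ → G := fun t => if t = 0 then u₀ else if t < n - 1 then a₀
    else if h : t - (n - 1) < n then w ⟨t - (n - 1), h⟩ else a₀ with hX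
  have hik : f (fun t : Fin n => X (0 + (t : ℕ))) = a₀ := by
    have e : (fun t : Fin n => X (0 + (t : ℕ)))
        = fun m : Fin n => if (m : ℕ) = 0 then u₀ else if (m : ℕ) < i then a₀ else a₀ := by
      funext t; have ht := t.isLt; simp only [hX]
      split_ifs <;> first | rfl | omega | (exfalso; omega) |
        exact (finAppNat w _ (by omega) (by omega)).trans (hw0 ⟨0, by omega⟩ rfl)
    rw [e]; exact hu₀
  have hil : f (fun t : Fin n => X (n - 1 + (t : ℕ))) = z := by
    have e : (fun t : Fin n => X (n - 1 + (t : ℕ))) = w := by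
      funext t; have ht := t.isLt; simp only [hX]
      split_ifs <;> first | (exfalso; omega) | exact finApp w _ _ t (by omega)
    rw [e]; exact hwv
  have hgk : ∀ m : Fin n, w m = if (m : ℕ) < 0 then X (m : ℕ) else if (m : ℕ) = 0 then a₀
      else X ((m : ℕ) + n - 1) := by
    intro m; have hm := m.isLt; simp only [hX]
    split_ifs <;> first | omega | (exfalso; omega) | exact hw0 m (by omega) | exact (finApp w _ _ m (by omega)).symm
  have hgl : ∀ m : Fin n, (if (m : ℕ) = 0 then u₀ else if (m : ℕ) < n - 1 then a₀ else z)
      = if (m : ℕ) < n - 1 then X (m : ℕ) else if (m : ℕ) = n - 1 then z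
      else X ((m : ℕ) + n - 1) := by
    intro m; have hm := m.isLt; simp only [hX]
    split_ifs <;> first | rfl | omega | (exfalso; omega)
  have key := assoc_step f hassoc X (show 0 < n by omega) (show n - 1 < n by omega) hik hil hgk hgl
  exact key.symm.trans hwv

set_option maxHeartbeats 1000000 in
lemma mRA
    (HL : ∀ a b : G, ∃ x, f (fun m : Fin n => if (m : ℕ) = 0 then x else if (m : ℕ) < i then b else a) = b)
    (RN : ∀ z : G, f (fun m : Fin n => if (m : ℕ) = 0 then z else if (m : ℕ) < n - 1 then a₀ else v₀) = z) :
    ∀ c b : G, ∃ z : G, f (fun m : Fin n => if (m : ℕ) = 0 then z else if (m : ℕ) + 1 < i then a₀ else if (m : ℕ) + 1 = i then v₀ else c) = b := by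
  intro c b
  obtain ⟨xx, hxx⟩ := HL c b
  set X : ℕ → G := fun t => if t = 0 then xx else if t < i then b
    else if t < i + n - 2 then a₀ else if t = i + n - 2 then v₀ else c with hX
  have hik : f (fun t : Fin n => X (i - 1 + (t : ℕ))) = X (i - 1) := by
    have e : (fun t : Fin n => X (i - 1 + (t : ℕ)))
        = fun m : Fin n => if (m : ℕ) = 0 then X (i - 1) else if (m : ℕ) < n - 1 then a₀ else v₀ := by
      funext t; have ht := t.isLt; simp only [hX]
      split_ifs <;> first | rfl | omega | (exfalso; omega)
    rw [e]; exact RN (X (i - 1))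
  have hgk : ∀ m : Fin n, (if (m : ℕ) = 0 then xx else if (m : ℕ) < i then b else c)
      = if (m : ℕ) < i - 1 then X (m : ℕ) else if (m : ℕ) = i - 1 then X (i - 1)
      else X ((m : ℕ) + n - 1) := by
    intro m; have hm := m.isLt; simp only [hX]
    split_ifs <;> first | rfl | omega | (exfalso; omega)
  have hgl : ∀ m : Fin n, (if (m : ℕ) = 0 then f (fun t : Fin n => X (0 + (t : ℕ))) else if (m : ℕ) + 1 < i then a₀ else if (m : ℕ) + 1 = i then v₀ else c)
      = if (m : ℕ) < 0 then X (m : ℕ) else if (m : ℕ) = 0 then f (fun t : Fin n => X (0 + (t : ℕ)))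
      else X ((m : ℕ) + n - 1) := by
    intro m; have hm := m.isLt; simp only [hX]
    split_ifs <;> first | rfl | omega | (exfalso; omega)
  have key := assoc_step f hassoc X (show i - 1 < n by omega) (show 0 < n by omega) hik rfl hgk hgl
  exact ⟨f (fun t : Fin n => X (0 + (t : ℕ))), key.symm.trans hxx⟩

set_option maxHeartbeats 1000000 in
lemma mRB
    (HR : ∀ a b : G, ∃ y, f (fun m : Fin n => if (m : ℕ) < n - j then a else if (m : ℕ) < n - 1 then b else y) = b)
    (LN : ∀ z : G, f (fun m : Fin n => if (m : ℕ) = 0 then u₀ else if (m : ℕ) < n - 1 then a₀ else z) = z) :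
    ∀ c b : G, ∃ z : G, f (fun m : Fin n => if (m : ℕ) < n - j then c else if (m : ℕ) = n - 1 then z else if (m : ℕ) = n - j then u₀ else a₀) = b := by
  intro c b
  obtain ⟨yy, hyy⟩ := HR c b
  set X : ℕ → G := fun t => if t < n - j then c else if t = n - j then u₀
    else if t < 2 * n - j - 1 then a₀ else if t < 2 * n - 2 then b else yy with hX
  have hik : f (fun t : Fin n => X (n - j + (t : ℕ))) = X (2 * n - j - 1) := by
    have e : (fun t : Fin n => X (n - j + (t : ℕ)))
        = fun m : Fin n => if (m : ℕ) = 0 then u₀ else if (m : ℕ) < n - 1 then a₀ else X (2 * n - j - 1) := by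
      funext t; have ht := t.isLt; simp only [hX]
      split_ifs <;> first | rfl | omega | (exfalso; omega)
    rw [e]; exact LN (X (2 * n - j - 1))
  have hgk : ∀ m : Fin n, (if (m : ℕ) < n - j then c else if (m : ℕ) < n - 1 then b else yy)
      = if (m : ℕ) < n - j then X (m : ℕ) else if (m : ℕ) = n - j then X (2 * n - j - 1)
      else X ((m : ℕ) + n - 1) := by
    intro m; have hm := m.isLt; simp only [hX]
    split_ifs <;> first | rfl | omega | (exfalso; omega)
  have hgl : ∀ m : Fin n, (if (m : ℕ) < n - j then c else if (m : ℕ) = n - 1 then f (fun t : Fin n => X (n - 1 + (t : ℕ))) else if (m : ℕ) = n - j then u₀ else a₀)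
      = if (m : ℕ) < n - 1 then X (m : ℕ) else if (m : ℕ) = n - 1 then f (fun t : Fin n => X (n - 1 + (t : ℕ)))
      else X ((m : ℕ) + n - 1) := by
    intro m; have hm := m.isLt; simp only [hX]
    split_ifs <;> first | rfl | omega | (exfalso; omega)
  have key := assoc_step f hassoc X (show n - j < n by omega) (show n - 1 < n by omega) hik rfl hgk hgl
  exact ⟨f (fun t : Fin n => X (n - 1 + (t : ℕ))), key.symm.trans hyy⟩

end MasterSteps

end Helpers


set_option linter.unreachableTactic false
set_option linter.unusedTactic false
set_option linter.unusedSectionVars false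

section MasterSteps2

variable {G : Type*} {n : ℕ} (hn : 2 < n) (f : (Fin n → G) → G)
  (hassoc : IsNAssoc n f) {i j : ℕ} (hi1 : 1 ≤ i) (hi2 : i ≤ n - 1)
  (hj1 : 1 ≤ j) (hj2 : j ≤ n - 1) (a₀ v₀ u₀ : G)

include hn hi1 hi2 hj1 hj2 hassoc

set_option maxHeartbeats 4000000 in
lemma mS0
    (RA : ∀ c b : G, ∃ z : G, f (fun m : Fin n => if (m : ℕ) = 0 then z else if (m : ℕ) + 1 < i then a₀ else if (m : ℕ) + 1 = i then v₀ else c) = b) :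
    ∀ (d : Fin n → G) (b : G), ∃ z : G, f (fun m : Fin n => if (m : ℕ) = 0 then z else d m) = b := by
  intro d b
  obtain ⟨z₁, hz₁⟩ := RA (f (fun s : Fin n => if (s : ℕ) = 0 then a₀ else d s)) b
  set X : ℕ → G := fun t => if t = 0 then z₁ else if t + 1 < i then a₀ else if t + 1 = i then v₀
    else if t < n - 1 then f (fun s : Fin n => if (s : ℕ) = 0 then a₀ else d s)
    else if t = n - 1 then a₀ else if h : t - n + 1 < n then d ⟨t - n + 1, h⟩ else a₀ with hX
  have hik : f (fun t : Fin n => X (n - 1 + (t : ℕ))) = f (fun s : Fin n => if (s : ℕ) = 0 then a₀ else d s) := by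
    refine fcongr f fun t => ?_
    have ht := t.isLt; simp only [hX]
    split_ifs <;> first | rfl | omega | (exfalso; omega) | exact finApp d _ _ t (by omega)
  have hgk : ∀ m : Fin n, (if (m : ℕ) = 0 then z₁ else if (m : ℕ) + 1 < i then a₀ else if (m : ℕ) + 1 = i then v₀ else f (fun s : Fin n => if (s : ℕ) = 0 then a₀ else d s))
      = if (m : ℕ) < n - 1 then X (m : ℕ) else if (m : ℕ) = n - 1 then f (fun s : Fin n => if (s : ℕ) = 0 then a₀ else d s)
      else X ((m : ℕ) + n - 1) := by
    intro m; have hm := m.isLt; simp only [hX]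
    split_ifs <;> first | rfl | omega | (exfalso; omega)
  have hgl : ∀ m : Fin n, (if (m : ℕ) = 0 then f (fun t : Fin n => X (0 + (t : ℕ))) else d m)
      = if (m : ℕ) < 0 then X (m : ℕ) else if (m : ℕ) = 0 then f (fun t : Fin n => X (0 + (t : ℕ)))
      else X ((m : ℕ) + n - 1) := by
    intro m; have hm := m.isLt; simp only [hX]
    split_ifs <;> first | rfl | omega | (exfalso; omega) | exact (finApp d _ _ m (by omega)).symm
  have key := assoc_step f hassoc X (show n - 1 < n by omega) (show 0 < n by omega) hik rfl hgk hgl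
  exact ⟨f (fun t : Fin n => X (0 + (t : ℕ))), key.symm.trans hz₁⟩

set_option maxHeartbeats 4000000 in
lemma mS1
    (RB : ∀ c b : G, ∃ z : G, f (fun m : Fin n => if (m : ℕ) < n - j then c else if (m : ℕ) = n - 1 then z else if (m : ℕ) = n - j then u₀ else a₀) = b) :
    ∀ (d : Fin n → G) (b : G), ∃ z : G, f (fun m : Fin n => if (m : ℕ) = n - 1 then z else d m) = b := by
  intro d b
  obtain ⟨z₁, hz₁⟩ := RB (f (fun s : Fin n => if (s : ℕ) = n - 1 then a₀ else d s)) b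
  set X : ℕ → G := fun t => if h : t < n - 1 then d ⟨t, by omega⟩ else if t = n - 1 then a₀
    else if t = 2 * n - 2 then z₁ else if t < 2 * n - j - 1 then f (fun s : Fin n => if (s : ℕ) = n - 1 then a₀ else d s)
    else if t = 2 * n - j - 1 then u₀ else a₀ with hX
  have hik : f (fun t : Fin n => X (0 + (t : ℕ))) = f (fun s : Fin n => if (s : ℕ) = n - 1 then a₀ else d s) := by
    refine fcongr f fun t => ?_
    have ht := t.isLt; simp only [hX]
    split_ifs <;> first | rfl | omega | (exfalso; omega) | exact finApp d _ _ t (by omega)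
  have hgk : ∀ m : Fin n, (if (m : ℕ) < n - j then f (fun s : Fin n => if (s : ℕ) = n - 1 then a₀ else d s) else if (m : ℕ) = n - 1 then z₁ else if (m : ℕ) = n - j then u₀ else a₀)
      = if (m : ℕ) < 0 then X (m : ℕ) else if (m : ℕ) = 0 then f (fun s : Fin n => if (s : ℕ) = n - 1 then a₀ else d s)
      else X ((m : ℕ) + n - 1) := by
    intro m; have hm := m.isLt; simp only [hX]
    split_ifs <;> first | rfl | omega | (exfalso; omega)
  have hgl : ∀ m : Fin n, (if (m : ℕ) = n - 1 then f (fun t : Fin n => X (n - 1 + (t : ℕ))) else d m)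
      = if (m : ℕ) < n - 1 then X (m : ℕ) else if (m : ℕ) = n - 1 then f (fun t : Fin n => X (n - 1 + (t : ℕ)))
      else X ((m : ℕ) + n - 1) := by
    intro m; have hm := m.isLt; simp only [hX]
    split_ifs <;> first | rfl | omega | (exfalso; omega) | exact (finApp d _ _ m (by omega)).symm
  have key := assoc_step f hassoc X (show 0 < n by omega) (show n - 1 < n by omega) hik rfl hgk hgl
  exact ⟨f (fun t : Fin n => X (n - 1 + (t : ℕ))), key.symm.trans hz₁⟩

set_option maxHeartbeats 4000000 in
lemma mRNE
    (Sr : ∀ c b : G, ∃ w : Fin n → G, (∀ m : Fin n, (m : ℕ) = n - 1 → w m = c) ∧ f w = b)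
    (S1 : ∀ (d : Fin n → G) (b : G), ∃ z : G, f (fun m : Fin n => if (m : ℕ) = n - 1 then z else d m) = b) :
    ∀ (v : ℕ → G) (q : ℕ), q ≤ n - 2 → ∃ τ : G, ∀ z : G,
      f (fun m : Fin n => if (m : ℕ) = 0 then z else if (m : ℕ) ≤ q then v ((m : ℕ) - 1) else if (m : ℕ) < n - 1 then a₀ else τ) = z := by
  intro v q hq
  obtain ⟨τ, hτ⟩ := S1 (fun m : Fin n => if (m : ℕ) = 0 then a₀ else if (m : ℕ) ≤ q then v ((m : ℕ) - 1) else a₀) a₀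
  refine ⟨τ, fun z => ?_⟩
  obtain ⟨w, hwl, hwv⟩ := Sr a₀ z
  set X : ℕ → G := fun t => if h : t < n - 1 then w ⟨t, by omega⟩ else if t = n - 1 then a₀
    else if t = 2 * n - 2 then τ else if t < n + q then v (t - n) else a₀ with hX
  have hik : f (fun t : Fin n => X (n - 1 + (t : ℕ))) = a₀ := by
    have e : (fun t : Fin n => X (n - 1 + (t : ℕ)))
        = fun m : Fin n => if (m : ℕ) = n - 1 then τ else if (m : ℕ) = 0 then a₀ else if (m : ℕ) ≤ q then v ((m : ℕ) - 1) else a₀ := by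
      funext t; have ht := t.isLt; simp only [hX]
      split_ifs <;> first | rfl | omega | (exfalso; omega) | exact congrArg v (by omega)
    rw [e]; exact hτ
  have hil : f (fun t : Fin n => X (0 + (t : ℕ))) = z := by
    have e : (fun t : Fin n => X (0 + (t : ℕ))) = w := by
      funext t; have ht := t.isLt; simp only [hX]
      split_ifs <;> first | (exfalso; omega) | exact finApp w _ _ t (by omega) | exact (hwl t (by omega)).symm
    rw [e]; exact hwv
  have hgk : ∀ m : Fin n, w m = if (m : ℕ) < n - 1 then X (m : ℕ) else if (m : ℕ) = n - 1 then a₀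
      else X ((m : ℕ) + n - 1) := by
    intro m; have hm := m.isLt; simp only [hX]
    split_ifs <;> first | omega | (exfalso; omega) | exact (finApp w _ _ m rfl).symm | exact hwl m (by omega)
  have hgl : ∀ m : Fin n, (if (m : ℕ) = 0 then z else if (m : ℕ) ≤ q then v ((m : ℕ) - 1) else if (m : ℕ) < n - 1 then a₀ else τ)
      = if (m : ℕ) < 0 then X (m : ℕ) else if (m : ℕ) = 0 then z else X ((m : ℕ) + n - 1) := by
    intro m; have hm := m.isLt; simp only [hX]
    split_ifs <;> first | rfl | omega | (exfalso; omega) | exact congrArg v (by omega)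
  have key := assoc_step f hassoc X (show n - 1 < n by omega) (show 0 < n by omega) hik hil hgk hgl
  exact key.symm.trans hwv

set_option maxHeartbeats 4000000 in
lemma mLNE
    (Sl : ∀ c b : G, ∃ w : Fin n → G, (∀ m : Fin n, (m : ℕ) = 0 → w m = c) ∧ f w = b)
    (S0 : ∀ (d : Fin n → G) (b : G), ∃ z : G, f (fun m : Fin n => if (m : ℕ) = 0 then z else d m) = b) :
    ∀ (u : ℕ → G) (q : ℕ), q ≤ n - 2 → ∃ σ : G, ∀ z : G,
      f (fun m : Fin n => if (m : ℕ) = 0 then σ else if (m : ℕ) < n - 1 - q then a₀ else if (m : ℕ) < n - 1 then u ((m : ℕ) - (n - 1 - q)) else z) = z := by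
  intro u q hq
  obtain ⟨σ, hσ⟩ := S0 (fun m : Fin n => if (m : ℕ) < n - 1 - q then a₀ else if (m : ℕ) < n - 1 then u ((m : ℕ) - (n - 1 - q)) else a₀) a₀
  refine ⟨σ, fun z => ?_⟩
  obtain ⟨w, hw0, hwv⟩ := Sl a₀ z
  set X : ℕ → G := fun t => if t = 0 then σ else if t < n - 1 - q then a₀
    else if t < n - 1 then u (t - (n - 1 - q)) else if h : t - (n - 1) < n then w ⟨t - (n - 1), h⟩ else a₀ with hX
  have hik : f (fun t : Fin n => X (0 + (t : ℕ))) = a₀ := by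
    have e : (fun t : Fin n => X (0 + (t : ℕ)))
        = fun m : Fin n => if (m : ℕ) = 0 then σ else if (m : ℕ) < n - 1 - q then a₀ else if (m : ℕ) < n - 1 then u ((m : ℕ) - (n - 1 - q)) else a₀ := by
      funext t; have ht := t.isLt; simp only [hX]
      split_ifs <;> first | rfl | omega | (exfalso; omega) | exact congrArg u (by omega) |
        exact (finAppNat w _ (by omega) (by omega)).trans (hw0 ⟨0, by omega⟩ rfl)
    rw [e]; exact hσ
  have hil : f (fun t : Fin n => X (n - 1 + (t : ℕ))) = z := by
    have e : (fun t : Fin n => X (n - 1 + (t : ℕ))) = w := by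
      funext t; have ht := t.isLt; simp only [hX]
      split_ifs <;> first | (exfalso; omega) | exact finApp w _ _ t (by omega)
    rw [e]; exact hwv
  have hgk : ∀ m : Fin n, w m = if (m : ℕ) < 0 then X (m : ℕ) else if (m : ℕ) = 0 then a₀
      else X ((m : ℕ) + n - 1) := by
    intro m; have hm := m.isLt; simp only [hX]
    split_ifs <;> first | omega | (exfalso; omega) | exact hw0 m (by omega) | exact (finApp w _ _ m (by omega)).symm
  have hgl : ∀ m : Fin n, (if (m : ℕ) = 0 then σ else if (m : ℕ) < n - 1 - q then a₀ else if (m : ℕ) < n - 1 then u ((m : ℕ) - (n - 1 - q)) else z)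
      = if (m : ℕ) < n - 1 then X (m : ℕ) else if (m : ℕ) = n - 1 then z
      else X ((m : ℕ) + n - 1) := by
    intro m; have hm := m.isLt; simp only [hX]
    split_ifs <;> first | rfl | omega | (exfalso; omega) | exact congrArg u (by omega)
  have key := assoc_step f hassoc X (show 0 < n by omega) (show n - 1 < n by omega) hik hil hgk hgl
  exact key.symm.trans hwv

end MasterSteps2


set_option linter.unreachableTactic false
set_option linter.unusedTactic false
set_option linter.unusedSectionVars false

section MasterSteps3

variable {G : Type*} {n : ℕ} (hn : 2 < n) (f : (Fin n → G) → G)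
  (hassoc : IsNAssoc n f) {i j : ℕ} (hi1 : 1 ≤ i) (hi2 : i ≤ n - 1)
  (hj1 : 1 ≤ j) (hj2 : j ≤ n - 1) (a₀ v₀ u₀ : G)

include hn hi1 hi2 hj1 hj2 hassoc a₀

set_option maxHeartbeats 4000000 in
lemma mEx
    (S0 : ∀ (d : Fin n → G) (b : G), ∃ z : G, f (fun m : Fin n => if (m : ℕ) = 0 then z else d m) = b)
    (S1 : ∀ (d : Fin n → G) (b : G), ∃ z : G, f (fun m : Fin n => if (m : ℕ) = n - 1 then z else d m) = b) :
    ∀ (k : ℕ), k < n → ∀ (x : Fin n → G) (c₀ : G), ∃ z : G,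
      f (fun m : Fin n => if (m : ℕ) = k then z else x m) = c₀ := by
  intro k hk x c₀
  by_cases hk0 : k = 0
  · subst hk0; exact S0 x c₀
  by_cases hk1 : k = n - 1
  · subst hk1; exact S1 x c₀
  obtain ⟨w₀, hw₀⟩ := S0 (fun m : Fin n => if (m : ℕ) ≤ k then a₀ else x m) c₀
  obtain ⟨ξ, hξ⟩ := S1 (fun m : Fin n => if (m : ℕ) < k then x m else a₀) w₀
  set X : ℕ → G := fun t => if h : t < k then x ⟨t, by omega⟩ else if t < n - 1 then a₀
    else if t = n - 1 then ξ else if t < n + k then a₀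
    else if h : t - n + 1 < n then x ⟨t - n + 1, h⟩ else a₀ with hX
  have hil : f (fun t : Fin n => X (0 + (t : ℕ))) = w₀ := by
    have e : (fun t : Fin n => X (0 + (t : ℕ)))
        = fun m : Fin n => if (m : ℕ) = n - 1 then ξ else if (m : ℕ) < k then x m else a₀ := by
      funext t; have ht := t.isLt; simp only [hX]
      split_ifs <;> first | rfl | omega | (exfalso; omega) | exact finApp x _ _ t (by omega)
    rw [e]; exact hξ
  have hgk : ∀ m : Fin n, (if (m : ℕ) = k then f (fun t : Fin n => X (k + (t : ℕ))) else x m)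
      = if (m : ℕ) < k then X (m : ℕ) else if (m : ℕ) = k then f (fun t : Fin n => X (k + (t : ℕ)))
      else X ((m : ℕ) + n - 1) := by
    intro m; have hm := m.isLt; simp only [hX]
    split_ifs <;> first | rfl | omega | (exfalso; omega) | exact (finApp x _ _ m (by omega)).symm
  have hgl : ∀ m : Fin n, (if (m : ℕ) = 0 then w₀ else if (m : ℕ) ≤ k then a₀ else x m)
      = if (m : ℕ) < 0 then X (m : ℕ) else if (m : ℕ) = 0 then w₀ else X ((m : ℕ) + n - 1) := by
    intro m; have hm := m.isLt; simp only [hX]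
    split_ifs <;> first | rfl | omega | (exfalso; omega) | exact (finApp x _ _ m (by omega)).symm
  have key := assoc_step f hassoc X (show k < n by omega) (show 0 < n by omega) rfl hil hgk hgl
  exact ⟨f (fun t : Fin n => X (k + (t : ℕ))), key.trans hw₀⟩

set_option maxHeartbeats 16000000 in
lemma mInj
    (Sr : ∀ c b : G, ∃ w : Fin n → G, (∀ m : Fin n, (m : ℕ) = n - 1 → w m = c) ∧ f w = b)
    (Sl : ∀ c b : G, ∃ w : Fin n → G, (∀ m : Fin n, (m : ℕ) = 0 → w m = c) ∧ f w = b)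
    (RNE : ∀ (v : ℕ → G) (q : ℕ), q ≤ n - 2 → ∃ τ : G, ∀ z : G,
      f (fun m : Fin n => if (m : ℕ) = 0 then z else if (m : ℕ) ≤ q then v ((m : ℕ) - 1) else if (m : ℕ) < n - 1 then a₀ else τ) = z)
    (LNE : ∀ (u : ℕ → G) (q : ℕ), q ≤ n - 2 → ∃ σ : G, ∀ z : G,
      f (fun m : Fin n => if (m : ℕ) = 0 then σ else if (m : ℕ) < n - 1 - q then a₀ else if (m : ℕ) < n - 1 then u ((m : ℕ) - (n - 1 - q)) else z) = z) :
    ∀ (k : ℕ), k < n → ∀ (x : Fin n → G), ∃ F : G → G, ∀ z : G,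
      F (f (fun m : Fin n => if (m : ℕ) = k then z else x m)) = z := by
  intro k hk x
  by_cases hk0 : k = 0
  · subst hk0
    obtain ⟨τ, hτ⟩ := RNE (fun t => if h : t + 1 < n then x ⟨t + 1, h⟩ else a₀) (n - 2) (le_refl _)
    obtain ⟨w, hw0, hwv⟩ := Sl (x ⟨n - 1, by omega⟩) τ
    refine ⟨fun cc => f (fun m : Fin n => if (m : ℕ) = 0 then cc else w m), fun z => ?_⟩
    set X : ℕ → G := fun t => if t = 0 then z else if h : t < n then x ⟨t, h⟩
      else if h : t - n + 1 < n then w ⟨t - n + 1, h⟩ else a₀ with hX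
    have hik : f (fun t : Fin n => X (0 + (t : ℕ)))
        = f (fun m : Fin n => if (m : ℕ) = 0 then z else x m) := by
      refine fcongr f fun t => ?_
      have ht := t.isLt; simp only [hX]
      split_ifs <;> first | rfl | omega | (exfalso; omega) | exact finApp x _ _ t (by omega)
    have hil : f (fun t : Fin n => X (n - 1 + (t : ℕ))) = τ := by
      have e : (fun t : Fin n => X (n - 1 + (t : ℕ))) = w := by
        funext t; have ht := t.isLt; simp only [hX]
        split_ifs <;> first | (exfalso; omega) | exact finApp w _ _ t (by omega) |
          exact (finAppNat x _ (by omega) (by omega)).trans ((hw0 t (by omega)).symm)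
      rw [e]; exact hwv
    have hgk : ∀ m : Fin n, (if (m : ℕ) = 0 then f (fun m : Fin n => if (m : ℕ) = 0 then z else x m) else w m)
        = if (m : ℕ) < 0 then X (m : ℕ) else if (m : ℕ) = 0 then f (fun m : Fin n => if (m : ℕ) = 0 then z else x m)
        else X ((m : ℕ) + n - 1) := by
      intro m; have hm := m.isLt; simp only [hX]
      split_ifs <;> first | rfl | omega | (exfalso; omega) | exact (finApp w _ _ m (by omega)).symm
    have hgl : ∀ m : Fin n, (if (m : ℕ) = 0 then z else if (m : ℕ) ≤ n - 2 then (fun t => if h : t + 1 < n then x ⟨t + 1, h⟩ else a₀) ((m : ℕ) - 1) else if (m : ℕ) < n - 1 then a₀ else τ)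
        = if (m : ℕ) < n - 1 then X (m : ℕ) else if (m : ℕ) = n - 1 then τ else X ((m : ℕ) + n - 1) := by
      intro m; have hm := m.isLt; simp only [hX]
      split_ifs <;> first | rfl | omega | (exfalso; omega) | exact finAppNat x _ _ (by omega)
    have key := assoc_step f hassoc X (show 0 < n by omega) (show n - 1 < n by omega) hik hil hgk hgl
    exact key.trans (hτ z)
  by_cases hk1 : k = n - 1
  · subst hk1
    obtain ⟨σ, hσ2⟩ := LNE (fun t => if h : t + 1 < n then x ⟨t + 1, h⟩ else a₀) (n - 2) (le_refl _)
    obtain ⟨w, hwl, hwv⟩ := Sr (x ⟨0, by omega⟩) σ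
    refine ⟨fun cc => f (fun m : Fin n => if (m : ℕ) = n - 1 then cc else w m), fun z => ?_⟩
    set X : ℕ → G := fun t => if h : t < n - 1 then w ⟨t, by omega⟩ else if t = 2 * n - 2 then z
      else if h : t - (n - 1) < n - 1 then x ⟨t - (n - 1), by omega⟩ else a₀ with hX
    have hik : f (fun t : Fin n => X (0 + (t : ℕ))) = σ := by
      have e : (fun t : Fin n => X (0 + (t : ℕ))) = w := by
        funext t; have ht := t.isLt; simp only [hX]
        split_ifs <;> first | (exfalso; omega) | exact finApp w _ _ t (by omega) |
          exact (finAppNat x _ (by omega) (by omega)).trans ((hwl t (by omega)).symm)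
      rw [e]; exact hwv
    have hil : f (fun t : Fin n => X (n - 1 + (t : ℕ)))
        = f (fun m : Fin n => if (m : ℕ) = n - 1 then z else x m) := by
      refine fcongr f fun t => ?_
      have ht := t.isLt; simp only [hX]
      split_ifs <;> first | rfl | omega | (exfalso; omega) | exact finApp x _ _ t (by omega)
    have hgk : ∀ m : Fin n, (if (m : ℕ) = 0 then σ else if (m : ℕ) < n - 1 - (n - 2) then a₀ else if (m : ℕ) < n - 1 then (fun t => if h : t + 1 < n then x ⟨t + 1, h⟩ else a₀) ((m : ℕ) - (n - 1 - (n - 2))) else z)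
        = if (m : ℕ) < 0 then X (m : ℕ) else if (m : ℕ) = 0 then σ else X ((m : ℕ) + n - 1) := by
      intro m; have hm := m.isLt; simp only [hX]
      split_ifs <;> first | rfl | omega | (exfalso; omega) | exact finAppNat x _ _ (by omega)
    have hgl : ∀ m : Fin n, (if (m : ℕ) = n - 1 then f (fun m : Fin n => if (m : ℕ) = n - 1 then z else x m) else w m)
        = if (m : ℕ) < n - 1 then X (m : ℕ) else if (m : ℕ) = n - 1 then f (fun m : Fin n => if (m : ℕ) = n - 1 then z else x m)
        else X ((m : ℕ) + n - 1) := by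
      intro m; have hm := m.isLt; simp only [hX]
      split_ifs <;> first | rfl | omega | (exfalso; omega) | exact (finApp w _ _ m (by omega)).symm
    have key := assoc_step f hassoc X (show 0 < n by omega) (show n - 1 < n by omega) hik hil hgk hgl
    exact key.symm.trans (hσ2 z)
  · obtain ⟨σ, hσ2⟩ := LNE (fun t => if h : t < n then x ⟨t, h⟩ else a₀) k (by omega)
    obtain ⟨τ, hτ⟩ := RNE (fun t => if h : t + k + 1 < n then x ⟨t + k + 1, h⟩ else a₀) (n - 1 - k) (by omega)
    refine ⟨fun cc => f (fun m : Fin n => if (m : ℕ) = 0 then σ else if (m : ℕ) < n - 1 - k then a₀ else if (m : ℕ) = n - 1 - k then cc else if (m : ℕ) < n - 1 then a₀ else τ), fun z => ?_⟩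
    set X : ℕ → G := fun t => if t = 0 then σ else if t < n - 1 - k then a₀
      else if h : t ≤ n - 2 then x ⟨t - (n - 1 - k), by omega⟩ else if t = n - 1 then z
      else if h : t ≤ 2 * n - 2 - k then x ⟨t - n + k + 1, by omega⟩
      else if t = 2 * n - 2 then τ else a₀ with hX
    have hik : f (fun t : Fin n => X (n - 1 - k + (t : ℕ)))
        = f (fun m : Fin n => if (m : ℕ) = k then z else x m) := by
      refine fcongr f fun t => ?_
      have ht := t.isLt; simp only [hX]
      split_ifs <;> first | rfl | omega | (exfalso; omega) | exact finApp x _ _ t (by omega)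
    have hil : f (fun t : Fin n => X (0 + (t : ℕ))) = z := by
      have e : (fun t : Fin n => X (0 + (t : ℕ)))
          = fun m : Fin n => if (m : ℕ) = 0 then σ else if (m : ℕ) < n - 1 - k then a₀ else if (m : ℕ) < n - 1 then (fun t => if h : t < n then x ⟨t, h⟩ else a₀) ((m : ℕ) - (n - 1 - k)) else z := by
        funext t; have ht := t.isLt; simp only [hX]
        split_ifs <;> first | rfl | omega | (exfalso; omega) | exact finAppNat x _ _ (by omega)
      rw [e]; exact hσ2 z
    have hgk : ∀ m : Fin n, (if (m : ℕ) = 0 then σ else if (m : ℕ) < n - 1 - k then a₀ else if (m : ℕ) = n - 1 - k then f (fun m : Fin n => if (m : ℕ) = k then z else x m) else if (m : ℕ) < n - 1 then a₀ else τ)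
        = if (m : ℕ) < n - 1 - k then X (m : ℕ) else if (m : ℕ) = n - 1 - k then f (fun m : Fin n => if (m : ℕ) = k then z else x m)
        else X ((m : ℕ) + n - 1) := by
      intro m; have hm := m.isLt; simp only [hX]
      split_ifs <;> first | rfl | omega | (exfalso; omega)
    have hgl : ∀ m : Fin n, (if (m : ℕ) = 0 then z else if (m : ℕ) ≤ n - 1 - k then (fun t => if h : t + k + 1 < n then x ⟨t + k + 1, h⟩ else a₀) ((m : ℕ) - 1) else if (m : ℕ) < n - 1 then a₀ else τ)
        = if (m : ℕ) < 0 then X (m : ℕ) else if (m : ℕ) = 0 then z else X ((m : ℕ) + n - 1) := by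
      intro m; have hm := m.isLt; simp only [hX]
      split_ifs <;> first | rfl | omega | (exfalso; omega) | exact finAppNat x _ _ (by omega)
    have key := assoc_step f hassoc X (show n - 1 - k < n by omega) (show 0 < n by omega) hik hil hgk hgl
    exact key.trans (hτ z)

end MasterSteps3


lemma master {G : Type*} (n : ℕ) (hn : 2 < n) (f : (Fin n → G) → G)
    (hassoc : IsNAssoc n f) (i j : ℕ) (hi1 : 1 ≤ i) (hi2 : i ≤ n - 1)
    (hj1 : 1 ≤ j) (hj2 : j ≤ n - 1)
    (HL : ∀ a b : G, ∃ x, f (fun m : Fin n => if (m : ℕ) = 0 then x else if (m : ℕ) < i then b else a) = b)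
    (HR : ∀ a b : G, ∃ y, f (fun m : Fin n => if (m : ℕ) < n - j then a else if (m : ℕ) < n - 1 then b else y) = b)
    (a₀ : G) (k : ℕ) (hk : k < n) (x : Fin n → G) (c₀ : G) :
    ∃! z, f (fun m : Fin n => if (m : ℕ) = k then z else x m) = c₀ := by
  obtain ⟨v₀, hv₀⟩ := HR a₀ a₀
  obtain ⟨u₀, hu₀⟩ := HL a₀ a₀
  have Sr := mSr hn f hassoc hi1 hi2 hj1 hj2 HL
  have Sl := mSl hn f hassoc hi1 hi2 hj1 hj2 HR
  have RN := mRN hn f hassoc hi1 hi2 hj1 hj2 a₀ v₀ hv₀ Sr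
  have LN := mLN hn f hassoc hi1 hi2 hj1 hj2 a₀ u₀ hu₀ Sl
  have RA := mRA hn f hassoc hi1 hi2 hj1 hj2 a₀ v₀ HL RN
  have RB := mRB hn f hassoc hi1 hi2 hj1 hj2 a₀ u₀ HR LN
  have S0 := mS0 hn f hassoc hi1 hi2 hj1 hj2 a₀ v₀ RA
  have S1 := mS1 hn f hassoc hi1 hi2 hj1 hj2 a₀ u₀ RB
  have RNE := mRNE hn f hassoc hi1 hi2 hj1 hj2 a₀ Sr S1
  have LNE := mLNE hn f hassoc hi1 hi2 hj1 hj2 a₀ Sl S0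
  obtain ⟨z, hz⟩ := mEx hn f hassoc hi1 hi2 hj1 hj2 a₀ S0 S1 k hk x c₀
  obtain ⟨F, hF⟩ := mInj hn f hassoc hi1 hi2 hj1 hj2 a₀ Sr Sl RNE LNE k hk x
  exact ⟨z, hz, fun z' hz' => by rw [← hF z', hz', ← hz, hF z]⟩

/-- Gal'mak, 1995.
An `n`-ary semigroup is an `n`-ary group iff for some `1 ≤ i, j ≤ n-1` and all `a, b`
there exist `x, y` with `f(x, b^{(i-1)}, a^{(n-i)}) = b` and `f(a^{(n-j)}, b^{(j-1)}, y) = b`. -/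
theorem nary_group_iff_galmak {G : Type*} (n : ℕ) (hn : 2 < n)
    (f : (Fin n → G) → G) (hassoc : IsNAssoc n f) :
    IsNAryGroup n f ↔
      ∃ i j : ℕ, 1 ≤ i ∧ i ≤ n - 1 ∧ 1 ≤ j ∧ j ≤ n - 1 ∧
        ∀ a b : G, ∃ x y : G,
          f (fun m => if (m : ℕ) = 0 then x else if (m : ℕ) < i then b else a) = b ∧
          f (fun m => if (m : ℕ) < n - j then a else if (m : ℕ) < n - 1 then b else y) = b := by
  constructor
  · rintro ⟨hg1, hg2⟩
    refine ⟨1, 1, le_refl 1, by omega, le_refl 1, by omega, fun a b => ?_⟩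
    obtain ⟨xx, hxx, -⟩ := hg2 0 (by omega) (fun _ => a) b
    obtain ⟨yy, hyy, -⟩ := hg2 (n - 1) (by omega) (fun _ => a) b
    refine ⟨xx, yy, ?_, ?_⟩
    · rw [show (fun m : Fin n => if (m : ℕ) = 0 then xx else if (m : ℕ) < 1 then b else a)
        = (fun m : Fin n => if (m : ℕ) = 0 then xx else (fun _ : Fin n => a) m) from
        funext fun m => by split_ifs <;> first | rfl | omega | (exfalso; omega)]
      exact hxx
    · rw [show (fun m : Fin n => if (m : ℕ) < n - 1 then a else if (m : ℕ) < n - 1 then b else yy)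
        = (fun m : Fin n => if (m : ℕ) = n - 1 then yy else (fun _ : Fin n => a) m) from
        funext fun m => by have := m.isLt; split_ifs <;> first | rfl | omega | (exfalso; omega)]
      exact hyy
  · rintro ⟨i, j, hi1, hi2, hj1, hj2, H⟩
    refine ⟨hassoc, fun k hk => ?_⟩
    intro x c₀
    exact master n hn f hassoc i j hi1 hi2 hj1 hj2
      (fun a b => (H a b).elim fun xx h => h.elim fun yy hh => ⟨xx, hh.1⟩)
      (fun a b => (H a b).elim fun xx h => h.elim fun yy hh => ⟨yy, hh.2⟩)
      (x ⟨0, by omega⟩) k hk x c₀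
end

section
/- Every infinitary group has exactly one element. That is, if G is a nonempty set and f : G^ℕ → G is an infinitary operation which is associative and such that for every position k, every x_0 ∈ G and every sequence (x_m) in G there is a unique z ∈ G with f(x_1,…,x_{k−1}, z, x_{k+1}, x_{k+2},…) = x_0, then G is a singleton. -/
/-- Every infinitary group has exactly one element. -/
theorem infinitary_group_subsingleton {G : Type*} [Nonempty G] (f : (ℕ → G) → G)
    (hassoc : ∀ (i j : ℕ) (x y : ℕ → G),
      f (fun m => if m < i then x m
          else if m = i then f (fun t => x (i + t)) else y (m - i - 1)) =
      f (fun m => if m < j then x m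
          else if m = j then f (fun t => x (j + t)) else y (m - j - 1)))
    (hsolv : ∀ (k : ℕ) (x : ℕ → G) (x₀ : G), ∃! z : G, f (Function.update x k z) = x₀) :
    ∃ a : G, ∀ b : G, b = a := by
  classical
  obtain ⟨a⟩ := (inferInstance : Nonempty G)
  let cns : G → (ℕ → G) → (ℕ → G) := fun g y m => if m = 0 then g else y (m - 1)
  have A01 : ∀ (x y : ℕ → G),
      f (cns (f x) y) = f (cns (x 0) (cns (f (fun s => x (s + 1))) y)) := by
    intro x y
    have h := hassoc 0 1 x y
    have h1 : (fun m => if m < 0 then x m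
        else if m = 0 then f (fun t => x (0 + t)) else y (m - 0 - 1)) = cns (f x) y := by
      funext m
      rcases m with _ | m <;> simp [cns]
    have h2 : (fun m => if m < 1 then x m
        else if m = 1 then f (fun t => x (1 + t)) else y (m - 1 - 1)) =
        cns (x 0) (cns (f (fun s => x (s + 1))) y) := by
      funext m
      rcases m with _ | _ | m <;> simp [cns, Nat.add_comm]
    rw [h1, h2] at h
    exact h
  have A12 : ∀ (x y : ℕ → G),
      f (cns (x 0) (cns (f (fun s => x (s + 1))) y)) =
      f (cns (x 0) (cns (x 1) (cns (f (fun s => x (s + 2))) y))) := by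
    intro x y
    have h := hassoc 1 2 x y
    have h1 : (fun m => if m < 1 then x m
        else if m = 1 then f (fun t => x (1 + t)) else y (m - 1 - 1)) =
        cns (x 0) (cns (f (fun s => x (s + 1))) y) := by
      funext m
      rcases m with _ | _ | m <;> simp [cns, Nat.add_comm]
    have h2 : (fun m => if m < 2 then x m
        else if m = 2 then f (fun t => x (2 + t)) else y (m - 2 - 1)) =
        cns (x 0) (cns (x 1) (cns (f (fun s => x (s + 2))) y)) := by
      funext m
      rcases m with _ | _ | _ | m
      · simp [cns]
      · simp [cns, Nat.add_comm]
      · simp [cns, Nat.add_comm]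
      · have e3 : m + 1 + 1 + 1 = m + 3 := by omega
        rw [e3]
        have e4 : m + 3 - 2 - 1 = m := by omega
        have e5 : m + 3 - 1 = m + 2 := by omega
        rw [if_neg (by omega), if_neg (by omega)]
        rw [e4]
        simp only [cns, e5]
        rw [if_neg (by omega), if_neg (by omega)]
        rfl
    rw [h1, h2] at h
    exact h
  have keyC : ∀ (z c : G) (y : ℕ → G), f (cns z (cns c y)) = f (cns c y) := by
    intro z c y
    obtain ⟨w, hw, -⟩ := hsolv 1 (cns (f fun _ => z) (fun _ => z)) c
    set e : G := f (fun _ => z) with he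
    set t : ℕ → G := cns w (fun _ => z) with ht
    have hupd : Function.update (cns e (fun _ => z)) 1 w = cns e t := by
      funext m
      rcases m with _ | _ | m <;> simp [Function.update, cns, ht]
    rw [hupd] at hw
    -- hw : f (cns e t) = c
    have hA : f (cns e (cns (f t) y)) = f (cns z (cns e (cns (f t) y))) := by
      have h := A01 (fun _ => z) (cns (f t) y)
      simpa [← he] using h
    have hI : f (cns (f (cns e t)) y) = f (cns e (cns (f t) y)) := by
      have h := A01 (cns e t) y
      have h0 : (cns e t) 0 = e := by simp [cns]
      have h3 : (fun s => (cns e t) (s + 1)) = t := by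
        funext s; simp [cns]
      rw [h0, h3] at h
      exact h
    have hII : f (cns z (cns (f (cns e t)) y)) = f (cns z (cns e (cns (f t) y))) := by
      have h := A12 (cns z (cns e t)) y
      have h0 : (cns z (cns e t)) 0 = z := by simp [cns]
      have h1 : (cns z (cns e t)) 1 = e := by simp [cns]
      have h2 : (fun s => (cns z (cns e t)) (s + 1)) = cns e t := by
        funext s; simp [cns]
      have h3 : (fun s => (cns z (cns e t)) (s + 2)) = t := by
        funext s; simp [cns]
      rw [h0, h1, h2, h3] at h
      exact h
    calc f (cns z (cns c y)) = f (cns z (cns (f (cns e t)) y)) := by rw [hw]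
      _ = f (cns z (cns e (cns (f t) y))) := hII
      _ = f (cns e (cns (f t) y)) := hA.symm
      _ = f (cns (f (cns e t)) y) := hI.symm
      _ = f (cns c y) := by rw [hw]
  refine ⟨a, fun b => ?_⟩
  obtain ⟨w, -, huniq⟩ := hsolv 0 (cns a (cns a (fun _ => a))) (f (cns a (fun _ => a)))
  have hupd : ∀ z : G, Function.update (cns a (cns a (fun _ => a))) 0 z
      = cns z (cns a (fun _ => a)) := by
    intro z
    funext m
    rcases m with _ | m <;> simp [Function.update, cns]
  have hb : b = w := huniq b (by
    show f (Function.update (cns a (cns a (fun _ => a))) 0 b) = _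
    rw [hupd]; exact keyC b a (fun _ => a))
  have ha : a = w := huniq a (by
    show f (Function.update (cns a (cns a (fun _ => a))) 0 a) = _
    rw [hupd]; exact keyC a a (fun _ => a))
  rw [hb, ha]
end
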